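/- arXiv:2604.08071 — 4 statements merged into one kernel-verified Lean document; each statement's English description precedes it below -/
import Mathlib

section
/- Let G be a directed graph and let (s,t) be a superbubble of G with superbubble graph B. Then no vertex in the interior of B (i.e., in V(B)\{s,t}) is a cutvertex of the underlying undirected graph of G. -/
/-!
Directed graphs are modelled as binary relations `G : V → V → Prop` on a vertex type `V`
(the vertex set of `G` is all of `V`); `G a b` means there is a directed edge from `a` to `b`.
Subgraphs induced by a vertex set `X : Set V` are modelled by restricting the relation to `X`.
-/

namespace Paper

variable {V : Type}

/-- The restriction (induced subgraph) of a relation to a vertex set `X`. -/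
def restrict (R : V → V → Prop) (X : Set V) : V → V → Prop :=
  fun a b => a ∈ X ∧ b ∈ X ∧ R a b

/-- Symmetric closure: the adjacency of the underlying undirected graph of a digraph. -/
def symcl (R : V → V → Prop) : V → V → Prop := fun a b => R a b ∨ R b a

/-- `p` is a directed walk from `a` to `b` (a nonempty list of consecutively adjacent
vertices starting at `a` and ending at `b`). -/
def IsDiWalk (R : V → V → Prop) (p : List V) (a b : V) : Prop :=
  p.Chain' R ∧ p.head? = some a ∧ p.getLast? = some b

/-- A directed path: a directed walk with no repeated vertex. -/
def IsDiPath (R : V → V → Prop) (p : List V) (a b : V) : Prop :=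
  IsDiWalk R p a b ∧ p.Nodup

/-- An undirected path from `a` to `b` in the underlying undirected graph of `R`. -/
def IsUPath (R : V → V → Prop) (p : List V) (a b : V) : Prop :=
  IsDiPath (symcl R) p a b

/-- Directed reachability (`a` reaches `b`). -/
def Reaches (R : V → V → Prop) (a b : V) : Prop := Relation.ReflTransGen R a b

/-- Undirected connectivity between `a` and `b` inside the vertex set `X`
(in the underlying undirected graph of the subgraph of `R` induced by `X`). -/
def UConn (R : V → V → Prop) (X : Set V) (a b : V) : Prop :=
  Relation.ReflTransGen (restrict (symcl R) X) a b

/-- `v` is a cutvertex of the underlying undirected graph of the subgraph induced by `X`: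
some two other vertices of `X` are connected in `X` but no longer connected
after deleting `v`. -/
def IsCutvertexOn (R : V → V → Prop) (X : Set V) (v : V) : Prop :=
  v ∈ X ∧ ∃ a ∈ X, ∃ b ∈ X, a ≠ v ∧ b ≠ v ∧ UConn R X a b ∧ ¬ UConn R (X \ {v}) a b

/-- `(s,t)` is a superbubbloid of `G` with superbubbloid graph `G[X]`. -/
structure IsSuperbubbloid (G : V → V → Prop) (X : Set V) (s t : V) : Prop where
  s_mem : s ∈ X
  t_mem : t ∈ X
  /-- (1) every `u ∈ X` is reachable from `s` -/
  reach_from_s : ∀ u ∈ X, Reaches G s u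
  /-- (2) `t` is reachable from every `u ∈ X` -/
  reach_to_t : ∀ u ∈ X, Reaches G u t
  /-- (3) every directed path entering `X` from outside goes through `s` -/
  enter_via_s : ∀ u ∈ X, ∀ w, w ∉ X → ∀ p : List V, IsDiPath G p w u → s ∈ p
  /-- (4) every directed path leaving `X` goes through `t` -/
  exit_via_t : ∀ u ∈ X, ∀ w, w ∉ X → ∀ p : List V, IsDiPath G p u w → t ∈ p
  /-- (5) if `uv` is an edge of `G[X]`, every directed `v`-`u` path in `G`
  contains both `t` and `s` -/
  acyclic : ∀ u ∈ X, ∀ v ∈ X, G u v → ∀ p : List V, IsDiPath G p v u → t ∈ p ∧ s ∈ p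
  /-- (6) the edge `ts` is not present -/
  no_back_edge : ¬ G t s

/-- `(s,t)` is a superbubbloid (for some vertex set). -/
def IsSuperbubbloidPair (G : V → V → Prop) (s t : V) : Prop :=
  ∃ X : Set V, IsSuperbubbloid G X s t

/-- `(s,t)` is a superbubble with superbubble graph `G[X]`: a superbubbloid such that
no `s' ∈ X \ {s}` makes `(s',t)` a superbubbloid. -/
def IsSuperbubble (G : V → V → Prop) (X : Set V) (s t : V) : Prop :=
  IsSuperbubbloid G X s t ∧ ∀ s' ∈ X, s' ≠ s → ¬ IsSuperbubbloidPair G s' t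


/-! ### Auxiliary lemmas -/

lemma chain'_rtg {R : V → V → Prop} :
    ∀ (p : List V) {a b : V}, p.Chain' R → p.head? = some a →
      p.getLast? = some b → Relation.ReflTransGen R a b := by
  intro p
  induction p with
  | nil => intro a b _ ha _; simp at ha
  | cons x l ih =>
    intro a b hc ha hb
    cases l with
    | nil =>
      simp at ha hb
      subst ha; subst hb
      exact Relation.ReflTransGen.refl
    | cons y l' =>
      unfold List.Chain' at hc
      rw [List.isChain_cons_cons] at hc
      rw [List.getLast?_cons_cons] at hb
      have hxa : x = a := by simpa using ha
      subst hxa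
      exact Relation.ReflTransGen.head hc.1 (ih hc.2 rfl hb)

lemma chain'_restrict {R : V → V → Prop} {Y : Set V} :
    ∀ {p : List V}, p.Chain' R → (∀ x ∈ p, x ∈ Y) → p.Chain' (restrict R Y) := by
  intro p
  induction p with
  | nil => intro _ _; exact List.isChain_nil
  | cons x l ih =>
    intro hc hm
    cases l with
    | nil => exact List.isChain_singleton x
    | cons y l' =>
      unfold List.Chain' at hc ⊢
      rw [List.isChain_cons_cons] at hc ⊢
      exact ⟨⟨hm x (by simp), hm y (by simp), hc.1⟩,
        ih hc.2 fun z hz => hm z (List.mem_cons_of_mem _ hz)⟩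

lemma diwalk_uconn {G : V → V → Prop} {Y : Set V} {p : List V} {a b : V}
    (hc : p.Chain' G) (ha : p.head? = some a) (hb : p.getLast? = some b)
    (hm : ∀ x ∈ p, x ∈ Y) : UConn G Y a b :=
  chain'_rtg p (chain'_restrict (hc.imp fun _ _ h => Or.inl h) hm) ha hb

lemma uconn_symm {G : V → V → Prop} {Y : Set V} {a b : V} (h : UConn G Y a b) :
    UConn G Y b a :=
  by
    haveI : Std.Symm (restrict (symcl G) Y) :=
      ⟨fun _ _ hxy => ⟨hxy.2.1, hxy.1, Or.symm hxy.2.2⟩⟩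
    exact Std.Symm.symm (r := Relation.ReflTransGen (restrict (symcl G) Y)) _ _ h

lemma reaches_path {R : V → V → Prop} {a b : V} (h : Reaches R a b) :
    ∃ p, IsDiPath R p a b := by
  induction h using Relation.ReflTransGen.head_induction_on with
  | refl => exact ⟨[b], ⟨List.isChain_singleton b, rfl, by simp⟩, List.nodup_singleton b⟩
  | @head x c hxc _ ih =>
    obtain ⟨q, ⟨hch, hhd, hlast⟩, hnd⟩ := ih
    by_cases hxq : x ∈ q
    · obtain ⟨q₁, q₂, rfl⟩ := List.append_of_mem hxq
      refine ⟨x :: q₂, ⟨(List.isChain_append.mp hch).2.1, rfl, ?_⟩, hnd.of_append_right⟩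
      rw [List.getLast?_append_of_ne_nil _ (List.cons_ne_nil _ _)] at hlast
      exact hlast
    · refine ⟨x :: q, ⟨List.isChain_cons.mpr ⟨?_, hch⟩, rfl, ?_⟩,
        List.nodup_cons.mpr ⟨hxq, hnd⟩⟩
      · intro y hy
        rw [hhd] at hy
        have hyc : c = y := by simpa using hy
        exact hyc ▸ hxc
      · cases q with
        | nil => simp at hhd
        | cons z l => rw [List.getLast?_cons_cons]; exact hlast

lemma path_split {R : V → V → Prop} {p : List V} {a b w : V}
    (hp : IsDiPath R p a b) (hw : w ∈ p) :
    ∃ q r, p = q ++ w :: r ∧ IsDiPath R (q ++ [w]) a w ∧ IsDiPath R (w :: r) w b ∧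
      w ∉ q ∧ w ∉ r := by
  obtain ⟨⟨hch, hhd, hlast⟩, hnd⟩ := hp
  obtain ⟨q, r, rfl⟩ := List.append_of_mem hw
  have hnq := List.nodup_append'.mp hnd
  have hwq : w ∉ q := fun hwq' => hnq.2.2 hwq' List.mem_cons_self
  have hwr : w ∉ r := (List.nodup_cons.mp hnq.2.1).1
  have hsplit := List.isChain_append.mp hch
  refine ⟨q, r, rfl, ⟨⟨?_, ?_, List.getLast?_concat⟩, ?_⟩,
    ⟨⟨hsplit.2.1, rfl, ?_⟩, hnq.2.1⟩, hwq, hwr⟩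
  · refine List.isChain_append.mpr ⟨hsplit.1, List.isChain_singleton w, ?_⟩
    intro x' hx' y' hy'
    have h0 : w = y' := by simpa using hy'
    subst h0
    exact hsplit.2.2 x' hx' w (by simp)
  · cases q with
    | nil => simpa using hhd
    | cons z l => simpa using hhd
  · refine List.nodup_append'.mpr ⟨hnq.1, List.nodup_singleton w, ?_⟩
    intro x' hx' hx''
    have h0 : x' = w := by simpa using hx''
    subst h0
    exact hwq hx'
  · rw [List.getLast?_append_of_ne_nil _ (List.cons_ne_nil _ _)] at hlast
    exact hlast

lemma path_tail {R : V → V → Prop} {r : List V} {w v z : V}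
    (hp : IsDiPath R (w :: v :: r) w z) :
    R w v ∧ IsDiPath R (v :: r) v z ∧ w ∉ v :: r := by
  obtain ⟨⟨hc, _, hl⟩, hnd⟩ := hp
  unfold List.Chain' at hc
  rw [List.isChain_cons_cons] at hc
  rw [List.getLast?_cons_cons] at hl
  exact ⟨hc.1, ⟨⟨hc.2, rfl, hl⟩, (List.nodup_cons.mp hnd).2⟩, (List.nodup_cons.mp hnd).1⟩

/-- No vertex in the interior of a superbubble graph `B = G[X]`
is a cutvertex of the underlying undirected graph of `G`
(the whole graph, i.e. the induced graph on `Set.univ`). -/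
theorem statement_2 (G : V → V → Prop) (X : Set V) (s t : V)
    (h : IsSuperbubble G X s t) :
    ∀ w ∈ X, w ≠ s → w ≠ t → ¬ IsCutvertexOn G Set.univ w := by
  intro w hwX hws hwt hcut
  classical
  obtain ⟨hb, hmin⟩ := h
  obtain ⟨-, a, -, b, -, haw, hbw, hab, hnab⟩ := hcut
  set D : Set V := Set.univ \ {w} with hD
  have hmemD : ∀ x : V, x ≠ w → x ∈ D := fun x hx => ⟨trivial, hx⟩
  have htrans : ∀ {x y z : V}, UConn G D x y → UConn G D y z → UConn G D x z :=
    fun hxy hyz => Relation.ReflTransGen.trans hxy hyz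
  have pconn : ∀ {p : List V} {x y : V}, IsDiPath G p x y → w ∉ p → UConn G D x y := by
    intro p x y hp hwp
    exact diwalk_uconn hp.1.1 hp.1.2.1 hp.1.2.2
      fun z hz => hmemD z (fun hzw => hwp (hzw ▸ hz))
  -- neighbours of w lie in X
  have inX : ∀ u : V, G u w → u ∈ X := by
    intro u hu
    by_contra huX
    have hne : u ≠ w := fun h' => huX (h' ▸ hwX)
    have hp : IsDiPath G [u, w] u w :=
      ⟨⟨List.isChain_pair.mpr hu, rfl, by simp⟩, by simp [hne]⟩
    have hs' := hb.enter_via_s w hwX u huX [u, w] hp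
    simp at hs'
    rcases hs' with rfl | rfl
    · exact huX hb.s_mem
    · exact hws rfl
  have outX : ∀ v : V, G w v → v ∈ X := by
    intro v hv
    by_contra hvX
    have hne : w ≠ v := fun h' => hvX (h' ▸ hwX)
    have hp : IsDiPath G [w, v] w v :=
      ⟨⟨List.isChain_pair.mpr hv, rfl, by simp⟩, by simp [hne]⟩
    have ht' := hb.exit_via_t w hwX v hvX [w, v] hp
    simp at ht'
    rcases ht' with rfl | rfl
    · exact hwt rfl
    · exact hvX hb.t_mem
  -- any directed path from s to an in-neighbour of w avoids w
  have factB : ∀ u : V, G u w → ∀ p : List V, IsDiPath G p s u → w ∉ p := by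
    intro u hu p hp hwp
    obtain ⟨q, r, rfl, hq, hr, hwq, hwr⟩ := path_split hp hwp
    have hs' : s ∈ w :: r := (hb.acyclic u (inX u hu) w hwX hu (w :: r) hr).2
    have hdisj := (List.nodup_append'.mp hp.2).2.2
    have hhd := hp.1.2.1
    cases q with
    | nil => exact hws (by simpa using hhd)
    | cons z l =>
      have hz : z = s := by simpa using hhd
      exact hdisj (hz ▸ (List.mem_cons_self (a := z) (l := l))) hs'
  -- any directed path from an out-neighbour of w to t avoids w
  have factC : ∀ v : V, G w v → ∀ p : List V, IsDiPath G p v t → w ∉ p := by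
    intro v hv p hp hwp
    obtain ⟨q, r, rfl, hq, hr, hwq, hwr⟩ := path_split hp hwp
    have ht' : t ∈ q ++ [w] := (hb.acyclic w hwX v (outX v hv) hv (q ++ [w]) hq).1
    have htq : t ∈ q := by
      rcases List.mem_append.mp ht' with h' | h'
      · exact h'
      · have : t = w := by simpa using h'
        exact absurd this.symm hwt
    have hlast := hp.1.2.2
    rw [List.getLast?_append_of_ne_nil _ (List.cons_ne_nil _ _)] at hlast
    have htr : t ∈ w :: r := List.mem_of_mem_getLast? (Option.mem_def.mpr hlast)
    exact (List.nodup_append'.mp hp.2).2.2 htq htr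
  have factB' : ∀ u : V, G u w → UConn G D s u := by
    intro u hu
    obtain ⟨p, hp⟩ := reaches_path (hb.reach_from_s u (inX u hu))
    exact pconn hp (factB u hu p hp)
  have factC' : ∀ v : V, G w v → UConn G D v t := by
    intro v hv
    obtain ⟨p, hp⟩ := reaches_path (hb.reach_to_t v (outX v hv))
    exact pconn hp (factC v hv p hp)
  -- every vertex of X other than w connects to s or to t avoiding w
  have factD : ∀ x ∈ X, x ≠ w → UConn G D s x ∨ UConn G D x t := by
    intro x hxX hxw
    obtain ⟨p, hp⟩ := reaches_path (hb.reach_from_s x hxX)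
    by_cases hwp : w ∈ p
    · obtain ⟨q, r, rfl, hq, hr, hwq, hwr⟩ := path_split hp hwp
      cases r with
      | nil =>
        have : w = x := by simpa using hr.1.2.2
        exact absurd this.symm hxw
      | cons v r' =>
        obtain ⟨hwv, hvx, hwvr⟩ := path_tail hr
        exact Or.inr (htrans (uconn_symm (pconn hvx hwvr)) (factC' v hwv))
    · exact Or.inl (pconn hp hwp)
  -- the crux: s and t are connected avoiding w (uses minimality)
  have factE : UConn G D s t := by
    by_contra hst
    set Y : Set V := {u | u ∈ X ∧ (u = w ∨ UConn G D u t)} with hY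
    have hwY : w ∈ Y := ⟨hwX, Or.inl rfl⟩
    have htY : t ∈ Y := ⟨hb.t_mem, Or.inr Relation.ReflTransGen.refl⟩
    have hYX : ∀ u ∈ Y, u ∈ X := fun u hu => hu.1
    have hYt : ∀ u ∈ Y, u ≠ w → UConn G D u t := by
      intro u hu hne
      rcases hu.2 with h' | h'
      · exact absurd h' hne
      · exact h'
    have hsY : s ∉ Y := by
      intro hsY'
      rcases hsY'.2 with h' | h'
      · exact hws h'.symm
      · exact hst h'
    have hdich : ∀ z ∈ X, z ∉ Y → UConn G D s z := by
      intro z hzX hzY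
      have hzw : z ≠ w := fun h' => hzY (h' ▸ hwY)
      rcases factD z hzX hzw with h' | h'
      · exact h'
      · exact absurd (show z ∈ Y from ⟨hzX, Or.inr h'⟩) hzY
    have cond3 : ∀ u ∈ Y, ∀ z, z ∉ Y → ∀ p : List V, IsDiPath G p z u → w ∈ p := by
      intro u hu z hz p hp
      by_contra hwp
      have huw : u ≠ w := by
        intro h'
        exact hwp (List.mem_of_mem_getLast? (Option.mem_def.mpr (h' ▸ hp.1.2.2)))
      have hut : UConn G D u t := hYt u hu huw
      have hzu : UConn G D z u := pconn hp hwp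
      by_cases hzX : z ∈ X
      · exact hst (htrans (hdich z hzX hz) (htrans hzu hut))
      · have hsp : s ∈ p := hb.enter_via_s u (hYX u hu) z hzX p hp
        obtain ⟨q, r, rfl, hq, hr, hwq', hwr'⟩ := path_split hp hsp
        have hconn_su : UConn G D s u :=
          pconn hr (fun hw' => hwp (List.mem_append.mpr (Or.inr hw')))
        exact hst (htrans hconn_su hut)
    have cond1 : ∀ u ∈ Y, Reaches G w u := by
      intro u hu
      by_cases huw : u = w
      · subst huw; exact Relation.ReflTransGen.refl
      · obtain ⟨p, hp⟩ := reaches_path (hb.reach_from_s u (hYX u hu))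
        by_cases hwp : w ∈ p
        · obtain ⟨q, r, rfl, hq, hr, _, _⟩ := path_split hp hwp
          exact chain'_rtg (w :: r) hr.1.1 rfl hr.1.2.2
        · exact absurd (htrans (pconn hp hwp) (hYt u hu huw)) hst
    have cond4 : ∀ u ∈ Y, ∀ z, z ∉ Y → ∀ p : List V, IsDiPath G p u z → t ∈ p := by
      intro u hu z hz p hp
      by_cases hzX : z ∈ X
      · exfalso
        have hzw : z ≠ w := fun h' => hz (h' ▸ hwY)
        have hsz : UConn G D s z := hdich z hzX hz
        by_cases hwp : w ∈ p
        · obtain ⟨q, r, rfl, hq, hr, hwq', hwr'⟩ := path_split hp hwp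
          cases r with
          | nil =>
            have : w = z := by simpa using hr.1.2.2
            exact hzw this.symm
          | cons v r' =>
            obtain ⟨hwv, hvz, hwvr⟩ := path_tail hr
            exact hst (htrans hsz (htrans (uconn_symm (pconn hvz hwvr)) (factC' v hwv)))
        · have huw : u ≠ w := fun h' =>
            hwp (List.mem_of_mem_head? (Option.mem_def.mpr (h' ▸ hp.1.2.1)))
          have huz : UConn G D u z := pconn hp hwp
          exact hst (htrans (htrans hsz (uconn_symm huz)) (hYt u hu huw))
      · exact hb.exit_via_t u (hYX u hu) z hzX p hp
    have cond5 : ∀ u ∈ Y, ∀ v ∈ Y, G u v → ∀ p : List V, IsDiPath G p v u →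
        t ∈ p ∧ w ∈ p := by
      intro u hu v hv huv p hp
      obtain ⟨ht', hs'⟩ := hb.acyclic u (hYX u hu) v (hYX v hv) huv p hp
      refine ⟨ht', ?_⟩
      obtain ⟨q, r, rfl, hq, hr, _, _⟩ := path_split hp hs'
      exact List.mem_append.mpr (Or.inr (cond3 u hu s hsY (s :: r) hr))
    have cond6 : ¬ G t w := by
      intro hedge
      obtain ⟨p, hp⟩ := reaches_path (hb.reach_to_t s hb.s_mem)
      exact hst (pconn hp (factB t hedge p hp))
    exact hmin w hwX hws
      ⟨Y, ⟨hwY, htY, cond1, fun u hu => hb.reach_to_t u (hYX u hu), cond3, cond4, cond5, cond6⟩⟩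
  -- all undirected neighbours of w connect to s avoiding w
  have hnbr : ∀ z : V, symcl G w z → UConn G D s z := by
    intro z hz
    rcases hz with h' | h'
    · exact htrans factE (uconn_symm (factC' z h'))
    · exact factB' z h'
  have key : ∀ x y : V, Relation.ReflTransGen (restrict (symcl G) Set.univ) x y →
      UConn G D (if x = w then s else x) (if y = w then s else y) := by
    intro x y hxy
    induction hxy with
    | refl => exact Relation.ReflTransGen.refl
    | @tail c d hsteps hstep ih =>
      obtain ⟨-, -, hcd⟩ := hstep
      by_cases hcw : c = w
      · by_cases hdw : d = w
        · rw [if_pos hdw]; rw [if_pos hcw] at ih; exact ih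
        · rw [if_neg hdw]; rw [if_pos hcw] at ih
          exact htrans ih (hnbr d (hcw ▸ hcd))
      · by_cases hdw : d = w
        · rw [if_pos hdw]; rw [if_neg hcw] at ih
          exact htrans ih (uconn_symm (hnbr c (Or.symm (hdw ▸ hcd))))
        · rw [if_neg hdw]; rw [if_neg hcw] at ih
          exact Relation.ReflTransGen.tail ih ⟨hmemD c hcw, hmemD d hdw, hcd⟩
  have hfin := key a b hab
  rw [if_neg haw, if_neg hbw] at hfin
  exact hnab hfin

end Paper
end

section
/- Let G be a bidirected graph, let F1 and F2 be distinct sign-cut graphs of G, let uα be a vertex-side of F1 and vβ a vertex-side of F2. Then the pair {uα, vβ} is not a snarl of G. -/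
/-!
Bidirected graphs.  A vertex-side is a vertex with a sign (`true` = `+`, `false` = `−`);
a bidirected edge is an unordered pair of vertex-sides (an element of `Sym2 (V × Bool)`).
-/

namespace Paper

variable {V : Type}

/-- A vertex-side: a vertex together with a sign (`true` = `+`, `false` = `−`). -/
abbrev Side (V : Type) := V × Bool

/-- A bidirected graph on the vertex type `V`: a vertex set together with a set of
bidirected edges, each an unordered pair of vertex-sides with endpoints in `verts`. -/
structure BDGraph (V : Type) where
  verts : Set V
  E : Set (Sym2 (Side V))
  wf : ∀ e ∈ E, ∀ x ∈ e, Prod.fst x ∈ verts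

namespace BDGraph

/-- `(u, α)` is a vertex-side of `G`, i.e. some edge of `G` is incident to `u`
with sign `α`. -/
def HasSide (G : BDGraph V) (u : V) (α : Bool) : Prop :=
  ∃ e ∈ G.E, (u, α) ∈ e

/-- Adjacency in the underlying undirected graph `U(G)` (signs ignored). -/
def uadj (G : BDGraph V) (a b : V) : Prop :=
  ∃ e ∈ G.E, ∃ σ τ : Bool, e = s((a, σ), (b, τ))

/-- Connectivity (reachability) in the underlying undirected graph `U(G)`. -/
def uReach (G : BDGraph V) (a b : V) : Prop :=
  Relation.ReflTransGen G.uadj a b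

/-- `v` is a tip of `G`: no two edges of `G` are incident to `v` with different signs. -/
def IsTip (G : BDGraph V) (v : V) : Prop :=
  ∀ e ∈ G.E, ∀ f ∈ G.E, ∀ σ : Bool, (v, σ) ∈ e → (v, !σ) ∈ f → False

/-- `v` is a tip of `G` with sign `α`: every edge of `G` incident to `v` carries the
sign `α` at `v`. -/
def IsTipWith (G : BDGraph V) (v : V) (α : Bool) : Prop :=
  ∀ e ∈ G.E, ∀ σ : Bool, (v, σ) ∈ e → σ = α

/-- Deletion of the vertex `x` (and all edges incident to it). -/
def deleteVert (G : BDGraph V) (x : V) : BDGraph V where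
  verts := G.verts \ {x}
  E := {e | e ∈ G.E ∧ ∀ y : Side V, y ∈ e → y.1 ≠ x}
  wf := by
    rintro e ⟨he, hne⟩ y hy
    exact ⟨G.wf e he y hy, hne y hy⟩

/-- Deletion of a single edge. -/
def deleteEdge (G : BDGraph V) (e₀ : Sym2 (Side V)) : BDGraph V where
  verts := G.verts
  E := G.E \ {e₀}
  wf := by
    rintro e ⟨he, -⟩ y hy
    exact G.wf e he y hy

/-- `x` is a cutvertex of (the underlying undirected graph of) `G`: some two other
vertices are connected in `G` but no longer connected after deleting `x`. -/
def IsCutvertex (G : BDGraph V) (x : V) : Prop :=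
  x ∈ G.verts ∧ ∃ a ∈ G.verts, ∃ b ∈ G.verts, a ≠ x ∧ b ≠ x ∧
    G.uReach a b ∧ ¬ (G.deleteVert x).uReach a b

/-- `G` is connected (underlying undirected graph, nonempty). -/
def Conn (G : BDGraph V) : Prop :=
  G.verts.Nonempty ∧ ∀ a ∈ G.verts, ∀ b ∈ G.verts, G.uReach a b

/-- `H` is a subgraph of `G`. -/
def IsSubgraphOf (H G : BDGraph V) : Prop :=
  H.verts ⊆ G.verts ∧ H.E ⊆ G.E

end BDGraph

/-! ### Splitting a pair of vertex-sides

Splitting the vertex-side `u α` detaches all edges incident to `u` with the opposite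
sign `!α` and reattaches them to a new vertex `u'`.  We split the two vertex-sides
`u α` and `v β` (`u ≠ v`) simultaneously, realising the two new vertices as `Sum.inr u`
and `Sum.inr v` in the vertex type `V ⊕ V` (original vertices are `Sum.inl`). -/

open Classical in
/-- Where each vertex-side goes under the splitting of `u α` and `v β`. -/
noncomputable def splitMap (u : V) (α : Bool) (v : V) (β : Bool) :
    Side V → Side (V ⊕ V) :=
  fun x =>
    if x = (u, !α) then (Sum.inr u, !α)
    else if x = (v, !β) then (Sum.inr v, !β)
    else (Sum.inl x.1, x.2)

/-- The graph obtained from `G` by splitting the vertex-sides `u α` and `v β`. -/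
noncomputable def BDGraph.split2 (G : BDGraph V) (u : V) (α : Bool) (v : V) (β : Bool) :
    BDGraph (V ⊕ V) where
  verts := (Sum.inl '' G.verts) ∪ {Sum.inr u, Sum.inr v}
  E := Sym2.map (splitMap u α v β) '' G.E
  wf := by
    rintro e ⟨f, hf, rfl⟩ x hx
    rw [Sym2.mem_map] at hx
    obtain ⟨y, hy, rfl⟩ := hx
    by_cases h1 : y = (u, !α)
    · simp only [splitMap, if_pos h1]
      simp
    · by_cases h2 : y = (v, !β)
      · simp only [splitMap, if_neg h1, if_pos h2]
        simp
      · simp only [splitMap, if_neg h1, if_neg h2]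
        exact Set.mem_union_left _ ⟨y.1, G.wf f hf y hy, rfl⟩

/-- The pair of vertex-sides `{u α, v β}` is separable in `G`: after splitting `u α`
and `v β`, there is a connected component containing `u` and `v` but neither of the
two new vertices `u'`, `v'`. -/
noncomputable def Separable (G : BDGraph V) (u : V) (α : Bool) (v : V) (β : Bool) : Prop :=
  u ≠ v ∧
    (G.split2 u α v β).uReach (Sum.inl u) (Sum.inl v) ∧
    ¬ (G.split2 u α v β).uReach (Sum.inl u) (Sum.inr u) ∧
    ¬ (G.split2 u α v β).uReach (Sum.inl u) (Sum.inr v) ∧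
    ¬ (G.split2 u α v β).uReach (Sum.inl v) (Sum.inr u) ∧
    ¬ (G.split2 u α v β).uReach (Sum.inl v) (Sum.inr v)

/-- The vertex set of the snarl component of `{u α, v β}`: the vertices of `G` lying in
the connected component of `u` after splitting `u α` and `v β`. -/
noncomputable def SnarlVerts (G : BDGraph V) (u : V) (α : Bool) (v : V) (β : Bool) :
    Set V :=
  {w | (G.split2 u α v β).uReach (Sum.inl u) (Sum.inl w)}

/-- The edge set of the snarl component of `{u α, v β}`: the edges of `G` lying (after
splitting) in the connected component of `u`. -/
noncomputable def SnarlEdges (G : BDGraph V) (u : V) (α : Bool) (v : V) (β : Bool) :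
    Set (Sym2 (Side V)) :=
  {e | e ∈ G.E ∧ ∀ y : Side V, y ∈ e →
      (G.split2 u α v β).uReach (Sum.inl u) (splitMap u α v β y).1}

/-- `{u α, v β}` is a snarl of `G`: separable, and minimal in the sense that the snarl
component `X` contains no vertex `w ∉ {u,v}` with vertex-sides `w γ`, `w !γ` such that
`{u α, w γ}` and `{w !γ, v β}` are both separable in `G`. -/
noncomputable def IsSnarl (G : BDGraph V) (u : V) (α : Bool) (v : V) (β : Bool) : Prop :=
  Separable G u α v β ∧
    ¬ ∃ w ∈ SnarlVerts G u α v β, w ≠ u ∧ w ≠ v ∧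
        ∃ γ : Bool, Separable G u α w γ ∧ Separable G w (!γ) v β

/-! ### Sign-consistent cutvertices and sign-cut graphs -/

/-- A cutvertex `x` of `G` is sign-consistent if `x` is a tip in `G[V(C) ∪ {x}]` for
every connected component `C` of `G − x` (components are described by a member `a`). -/
def BDGraph.SignConsistent (G : BDGraph V) (x : V) : Prop :=
  G.IsCutvertex x ∧
    ∀ a ∈ (G.deleteVert x).verts,
      ∀ e ∈ G.E, ∀ f ∈ G.E,
        (∀ y : Side V, y ∈ e → y.1 = x ∨ (G.deleteVert x).uReach a y.1) →
        (∀ y : Side V, y ∈ f → y.1 = x ∨ (G.deleteVert x).uReach a y.1) →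
        ∀ σ τ : Bool, (x, σ) ∈ e → (x, τ) ∈ f → σ = τ

open Classical in
/-- After splitting every sign-consistent vertex of `G` and relabelling, the two copies
of a sign-consistent vertex `x` are identified with the pairs `(x, true)`, `(x, false)`;
any other vertex `w` is identified with `(w, true)`.  `scKey G` sends a vertex-side to
the copy of its vertex that it is attached to. -/
noncomputable def scKey (G : BDGraph V) : Side V → Side V :=
  fun x => if G.SignConsistent x.1 then x else (x.1, true)

lemma scKey_fst (G : BDGraph V) (y : Side V) : (scKey G y).1 = y.1 := by
  unfold scKey
  split <;> rfl

lemma scKey_idem (G : BDGraph V) (y : Side V) : scKey G (scKey G y) = scKey G y := by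
  by_cases h : G.SignConsistent y.1
  · simp [scKey, h]
  · simp [scKey, h]

/-- The graph obtained from `G` by simultaneously splitting all sign-consistent
vertices (on the vertex type `V × Bool`, cf. `scKey`). -/
noncomputable def BDGraph.splitAll (G : BDGraph V) : BDGraph (Side V) where
  verts := {p : Side V | p.1 ∈ G.verts ∧ scKey G p = p}
  E := Sym2.map (fun y : Side V => (scKey G y, y.2)) '' G.E
  wf := by
    rintro e ⟨f, hf, rfl⟩ x hx
    rw [Sym2.mem_map] at hx
    obtain ⟨y, hy, rfl⟩ := hx
    show (scKey G y).1 ∈ G.verts ∧ scKey G (scKey G y) = scKey G y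
    exact ⟨by rw [scKey_fst]; exact G.wf f hf y hy, scKey_idem G y⟩

/-- `F` is a sign-cut graph of `G`: one of the graphs obtained by splitting every
sign-consistent vertex of `G` and relabelling each new vertex `y'` back to `y`;
concretely, the subgraph of `G` corresponding to a connected component of
`G.splitAll`. -/
noncomputable def IsSignCutGraph (G F : BDGraph V) : Prop :=
  ∃ p ∈ G.splitAll.verts,
    F.verts = {w : V | ∃ σ : Bool, (w, σ) ∈ G.splitAll.verts ∧
                  G.splitAll.uReach p (w, σ)} ∧
    F.E = {e | e ∈ G.E ∧ ∀ y : Side V, y ∈ e → G.splitAll.uReach p (scKey G y)}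

/-! ### Blocks -/

/-- `H` is a block of `G`: a maximal connected subgraph of `G` without a cutvertex. -/
def IsBlock (G H : BDGraph V) : Prop :=
  H.IsSubgraphOf G ∧ H.Conn ∧ (∀ x, ¬ H.IsCutvertex x) ∧
    ∀ H' : BDGraph V, H'.IsSubgraphOf G → H.IsSubgraphOf H' → H'.Conn →
      (∀ x, ¬ H'.IsCutvertex x) → H'.verts = H.verts ∧ H'.E = H.E

/-- `H'` is a dangling block of `v` with respect to the block `H`:
a block of `G` different from `H` containing `v` with vertex-sides of opposite
signs at `v`. -/
def IsDanglingBlock (G H : BDGraph V) (v : V) (H' : BDGraph V) : Prop :=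
  IsBlock G H' ∧ ¬ (H'.verts = H.verts ∧ H'.E = H.E) ∧ v ∈ H'.verts ∧
    H'.HasSide v true ∧ H'.HasSide v false

/-- `{u,v}` is a separation pair of `H`: some two other vertices of `H` are connected
in `H` but no longer connected after removing `u` and `v`. -/
def IsSepPairB (H : BDGraph V) (u v : V) : Prop :=
  ∃ a ∈ H.verts, ∃ b ∈ H.verts, a ≠ u ∧ a ≠ v ∧ b ≠ u ∧ b ≠ v ∧
    H.uReach a b ∧ ¬ ((H.deleteVert u).deleteVert v).uReach a b

/-- `{u,v}` is a split pair of `H`: a separation pair of `H` or an edge of `H`. -/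
def IsSplitPairB (H : BDGraph V) (u v : V) : Prop :=
  IsSepPairB H u v ∨ ∃ e ∈ H.E, ∃ σ τ : Bool, e = s((u, σ), (v, τ))

/-! ### Bidirected walks, paths and cycloids

A bidirected walk `{v₁ α₁, v₂ α̂₂}, {v₂ α₂, v₃ α̂₃}, …` is encoded by the list
`[(v₁, α₁), (v₂, α₂), …]` of its *departing* sides: the first entry `(v₁, α₁)` is the
side of `v₁` on the first edge, and for `i ≥ 2` the walk arrives at `vᵢ` with sign
`!αᵢ` and departs with sign `αᵢ` (so the sign alternates at every internal vertex). -/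

/-- One step of a bidirected walk, between consecutive departing sides. -/
def BStep (G : BDGraph V) (x y : Side V) : Prop :=
  s(x, (y.1, !y.2)) ∈ G.E

/-- `p` encodes a bidirected walk of `G` (at least one edge). -/
def IsBWalk (G : BDGraph V) (p : List (Side V)) : Prop :=
  2 ≤ p.length ∧ p.Chain' (BStep G)

/-- `p` encodes a `u α`-`v β` bidirected path of `G`: a bidirected walk without
repeated vertices which starts at `u` with sign `α` and arrives at `v` with sign `β`
(so the last departing side recorded is `(v, !β)`). -/
def IsBPath (G : BDGraph V) (p : List (Side V)) (u : V) (α : Bool) (v : V) (β : Bool) :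
    Prop :=
  IsBWalk G p ∧ p.head? = some (u, α) ∧ p.getLast? = some (v, !β) ∧
    (p.map Prod.fst).Nodup

/-- `G` has a cycloid: a closed bidirected walk through pairwise distinct vertices
whose sign alternates at every vertex, except possibly at one (exceptional) vertex,
which we may take to be the starting vertex.  The closing edge either alternates at
the start vertex (`s(y, (x.1, !x.2))`) or fails to alternate there (`s(y, x)`). -/
def HasCycloid (G : BDGraph V) : Prop :=
  ∃ p : List (Side V), p ≠ [] ∧ (p.map Prod.fst).Nodup ∧ p.Chain' (BStep G) ∧
    ∃ x y : Side V, p.head? = some x ∧ p.getLast? = some y ∧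
      (s(y, (x.1, !x.2)) ∈ G.E ∨ s(y, x) ∈ G.E)

/-- `G` has a cycloid with an exceptional vertex: exactly one vertex (the starting
one, after rotation) fails sign alternation. -/
def HasExceptionalCycloid (G : BDGraph V) : Prop :=
  ∃ p : List (Side V), p ≠ [] ∧ (p.map Prod.fst).Nodup ∧ p.Chain' (BStep G) ∧
    ∃ x y : Side V, p.head? = some x ∧ p.getLast? = some y ∧ s(y, x) ∈ G.E

/-! ### Flipping a vertex -/

open Classical in
/-- Flip the sign of every vertex-side of `u`. -/
noncomputable def flipSide (u : V) : Side V → Side V :=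
  fun x => if x.1 = u then (x.1, !x.2) else x

/-- The graph obtained from `G` by flipping the vertex `u` (every positive vertex-side
of `u` becomes negative and vice versa). -/
noncomputable def BDGraph.flip (G : BDGraph V) (u : V) : BDGraph V where
  verts := G.verts
  E := Sym2.map (flipSide u) '' G.E
  wf := by
    rintro e ⟨f, hf, rfl⟩ x hx
    rw [Sym2.mem_map] at hx
    obtain ⟨y, hy, rfl⟩ := hx
    have h1 : (flipSide u y).1 = y.1 := by
      unfold flipSide
      split <;> rfl
    rw [h1]
    exact G.wf f hf y hy



/-! ### Auxiliary machinery for Statement 6 -/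

namespace Aux6

open Sum

variable {V : Type}

lemma BD_uadj_symm (H : BDGraph V) {a b : V} (h : H.uadj a b) : H.uadj b a := by
  obtain ⟨e, he, σ, τ, rfl⟩ := h
  exact ⟨_, he, τ, σ, Sym2.eq_swap⟩

lemma BD_uReach_symm (H : BDGraph V) {a b : V} (h : H.uReach a b) : H.uReach b a :=
  @Std.Symm.symm _ _ (@Relation.ReflTransGen.stdSymm _ _ ⟨fun _ _ h => BD_uadj_symm H h⟩) _ _ h

lemma BD_uReach_trans (H : BDGraph V) {a b c : V} (h : H.uReach a b) (h' : H.uReach b c) :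
    H.uReach a c := Relation.ReflTransGen.trans h h'

lemma BD_uadj_intro (H : BDGraph V) {y z : Side V} (h : s(y, z) ∈ H.E) : H.uadj y.1 z.1 :=
  ⟨_, h, y.2, z.2, by rfl⟩

/-- generic: uadj for graphs of the form `Sym2.map f '' G.E`. -/
lemma uadj_map_intro (G : BDGraph V) {W : Type} (f : Side V → Side W)
    {H : BDGraph W} (hH : H.E = Sym2.map f '' G.E) {y z : Side V}
    (h : s(y, z) ∈ G.E) : H.uadj (f y).1 (f z).1 := by
  refine ⟨Sym2.map f s(y, z), by rw [hH]; exact ⟨_, h, rfl⟩, (f y).2, (f z).2, ?_⟩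
  rw [Sym2.map_pair_eq]

lemma uadj_map_elim (G : BDGraph V) {W : Type} (f : Side V → Side W)
    {H : BDGraph W} (hH : H.E = Sym2.map f '' G.E) {a b : W}
    (h : H.uadj a b) :
    ∃ y z : Side V, s(y, z) ∈ G.E ∧ (f y).1 = a ∧ (f z).1 = b := by
  obtain ⟨e, he, σ, τ, rfl⟩ := h
  rw [hH] at he
  obtain ⟨g, hg, hmap⟩ := he
  induction g using Sym2.ind with
  | _ y z =>
    rw [Sym2.map_pair_eq, Sym2.eq_iff] at hmap
    rcases hmap with ⟨h1, h2⟩ | ⟨h1, h2⟩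
    · exact ⟨y, z, hg, by rw [h1], by rw [h2]⟩
    · exact ⟨z, y, by rwa [Sym2.eq_swap] at hg, by rw [h2], by rw [h1]⟩

lemma split2_E (G : BDGraph V) (u : V) (α : Bool) (v : V) (β : Bool) :
    (G.split2 u α v β).E = Sym2.map (splitMap u α v β) '' G.E := rfl

lemma splitAll_E (G : BDGraph V) :
    G.splitAll.E = Sym2.map (fun y : Side V => (scKey G y, y.2)) '' G.E := rfl

lemma splitMap_eq_inl {u v : V} {α β : Bool} {y : Side V}
    (h1 : y ≠ (u, !α)) (h2 : y ≠ (v, !β)) :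
    splitMap u α v β y = (Sum.inl y.1, y.2) := by
  unfold splitMap; rw [if_neg h1, if_neg h2]

lemma splitMap_fst_inl {u v : V} {α β : Bool} {y : Side V} {c : V}
    (h : (splitMap u α v β y).1 = Sum.inl c) :
    y.1 = c ∧ y ≠ (u, !α) ∧ y ≠ (v, !β) := by
  unfold splitMap at h
  split_ifs at h with h1 h2 <;> simp_all

lemma splitMap_fst_inr {u v : V} {α β : Bool} {y : Side V} {c : V}
    (h : (splitMap u α v β y).1 = Sum.inr c) :
    (y = (u, !α) ∧ c = u) ∨ (y = (v, !β) ∧ c = v) := by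
  unfold splitMap at h
  split_ifs at h with h1 h2 <;> simp_all

open Classical in
lemma scKey_pair (G : BDGraph V) (a : V) (st : Bool) :
    scKey G (a, st) = if G.SignConsistent a then (a, st) else (a, true) := rfl

lemma splitAll_uadj_intro (G : BDGraph V) {y z : Side V} (h : s(y, z) ∈ G.E) :
    G.splitAll.uadj (scKey G y) (scKey G z) :=
  uadj_map_intro G _ (splitAll_E G) h

/-- membership of a vertex of an edge in `verts` -/
lemma vert_mem (G : BDGraph V) {y z : Side V} (h : s(y, z) ∈ G.E) : y.1 ∈ G.verts :=
  G.wf _ h y (by rw [Sym2.mem_iff]; left; rfl)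

/- deleteVert helpers -/
lemma deleteVert_uadj_intro (G : BDGraph V) {x : V} {y z : Side V}
    (h : s(y, z) ∈ G.E) (hy : y.1 ≠ x) (hz : z.1 ≠ x) :
    (G.deleteVert x).uadj y.1 z.1 := by
  refine ⟨s(y, z), ⟨h, ?_⟩, y.2, z.2, by rfl⟩
  intro w hw
  rw [Sym2.mem_iff] at hw
  rcases hw with rfl | rfl <;> assumption

lemma deleteVert_reach_ne (G : BDGraph V) {x a b : V}
    (h : (G.deleteVert x).uReach a b) (ha : a ≠ x) : b ≠ x := by
  induction h with
  | refl => exact ha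
  | tail _ hadj ih =>
    obtain ⟨e, ⟨_, hne⟩, σ, τ, rfl⟩ := hadj
    exact hne _ (by rw [Sym2.mem_iff]; right; rfl)

/-- The key comparison: a sign-consistent `x` meets a component with one sign only. -/
lemma sc_cmp (G : BDGraph V) {x : V} (hsc : G.SignConsistent x)
    {w : V} (hwV : w ∈ G.verts) (hwx : w ≠ x) {s1 s2 : Bool}
    (h1 : ∃ y : Side V, s((x, s1), y) ∈ G.E ∧ (y.1 = x ∨ (G.deleteVert x).uReach w y.1))
    (h2 : ∃ y : Side V, s((x, s2), y) ∈ G.E ∧ (y.1 = x ∨ (G.deleteVert x).uReach w y.1)) :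
    s1 = s2 := by
  obtain ⟨y1, he1, hy1⟩ := h1
  obtain ⟨y2, he2, hy2⟩ := h2
  have hwmem : w ∈ (G.deleteVert x).verts := ⟨hwV, by simpa using hwx⟩
  refine hsc.2 w hwmem _ he1 _ he2 ?_ ?_ s1 s2 ?_ ?_
  · intro y hy
    rw [Sym2.mem_iff] at hy
    rcases hy with rfl | rfl
    · exact Or.inl rfl
    · exact hy1
  · intro y hy
    rw [Sym2.mem_iff] at hy
    rcases hy with rfl | rfl
    · exact Or.inl rfl
    · exact hy2
  · rw [Sym2.mem_iff]; left; rfl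
  · rw [Sym2.mem_iff]; left; rfl

/-- a sign-consistent vertex has no mixed loop. -/
lemma sc_no_mixed_loop (G : BDGraph V) {x : V} (hsc : G.SignConsistent x) {s : Bool}
    (h : s((x, s), (x, !s)) ∈ G.E) : False := by
  obtain ⟨_, a, haV, _, _, hax, _, _, _⟩ := hsc.1
  have := sc_cmp G hsc haV hax (s1 := s) (s2 := !s)
    ⟨(x, !s), h, Or.inl rfl⟩ ⟨(x, s), by rwa [Sym2.eq_swap] at h, Or.inl rfl⟩
  simp at this

end Aux6

namespace Aux6
open Sum
variable {V : Type}

lemma exists_dup {α : Type} {l : List α} (h : ¬ l.Nodup) :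
    ∃ a l₁ l₂, l = l₁ ++ a :: l₂ ∧ a ∈ l₂ := by
  induction l with
  | nil => simp at h
  | cons b t ih =>
    by_cases hb : b ∈ t
    · exact ⟨b, [], t, rfl, hb⟩
    · have ht : ¬ t.Nodup := fun hn => h (List.nodup_cons.mpr ⟨hb, hn⟩)
      obtain ⟨a, l₁, l₂, rfl, ha⟩ := ih ht
      exact ⟨a, b :: l₁, l₂, rfl, ha⟩

lemma chain'_shorten {α : Type} {r : α → α → Prop} {u v : α} (m : List α)
    (hhead : m.head? = some u) (hc : m.Chain' r) (hlast : m.getLast? = some v)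
    (hnd : ¬ m.Nodup) :
    ∃ m' : List α, m'.length < m.length ∧ m'.head? = some u ∧ m'.Chain' r ∧
      m'.getLast? = some v := by
  obtain ⟨a, l₁, l₂, rfl, ha⟩ := exists_dup hnd
  obtain ⟨p, q, rfl⟩ := List.append_of_mem ha
  refine ⟨l₁ ++ a :: q, by simp, ?_, ?_, ?_⟩
  · cases l₁ with
    | nil => simpa using hhead
    | cons w t => simpa using hhead
  · have hc2 : ((l₁ ++ a :: p) ++ a :: q).Chain' r := by
      rw [List.append_assoc]
      simpa using hc
    unfold List.Chain' at hc2
    rw [List.isChain_append] at hc2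
    obtain ⟨hc3, hc4, hlink⟩ := hc2
    rw [List.isChain_append] at hc3
    obtain ⟨hc5, _, hlink2⟩ := hc3
    unfold List.Chain'
    rw [List.isChain_append]
    refine ⟨hc5, hc4, ?_⟩
    intro x hx y hy
    simp only [List.head?_cons, Option.mem_def, Option.some.injEq] at hy
    subst hy
    exact hlink2 x hx a (by simp)
  · rw [List.getLast?_append_cons]
    rw [List.getLast?_append_cons] at hlast
    rw [show a :: (p ++ a :: q) = (a :: p) ++ a :: q by simp,
      List.getLast?_append_cons] at hlast
    exact hlast

lemma exists_nodup_chain_aux {α : Type} {r : α → α → Prop} {u v : α} :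
    ∀ (n : ℕ) (l : List α), l.length ≤ n → List.Chain r u l → (u :: l).getLast? = some v →
    ∃ l', List.Chain r u l' ∧ (u :: l').getLast? = some v ∧ (u :: l').Nodup := by
  intro n
  induction n with
  | zero =>
    intro l hl hc hlast
    have : l = [] := List.length_eq_zero_iff.mp (Nat.le_zero.mp hl)
    subst this
    exact ⟨[], hc, hlast, by simp⟩
  | succ n ih =>
    intro l hl hc hlast
    by_cases hnd : (u :: l).Nodup
    · exact ⟨l, hc, hlast, hnd⟩
    · obtain ⟨m', hlen, hhead, hc', hlast'⟩ := chain'_shorten (u :: l)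
        rfl hc hlast hnd
      cases m' with
      | nil => simp at hhead
      | cons w t =>
        have hw : w = u := by simpa using hhead
        subst hw
        refine ih t ?_ hc' hlast'
        simp only [List.length_cons] at hlen
        omega

lemma exists_nodup_chain {α : Type} {r : α → α → Prop} {u v : α}
    (h : Relation.ReflTransGen r u v) :
    ∃ l, List.Chain r u l ∧ (u :: l).getLast? = some v ∧ (u :: l).Nodup := by
  obtain ⟨l, hc, hl⟩ := List.exists_isChain_cons_of_relationReflTransGen h
  refine exists_nodup_chain_aux l.length l le_rfl hc ?_
  rw [List.getLast?_eq_getLast_of_ne_nil (List.cons_ne_nil _ _), hl]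

end Aux6

namespace Aux6
open Sum
variable {V : Type}

/-- side is not one of the two detached sides -/
def SideOK (u : V) (α : Bool) (v : V) (β : Bool) (y : Side V) : Prop :=
  y ≠ (u, !α) ∧ y ≠ (v, !β)

/-- adjacency through an edge avoiding the detached sides (the all-`inl` part). -/
def pe (G : BDGraph V) (u : V) (α : Bool) (v : V) (β : Bool) (a b : V) : Prop :=
  ∃ y z : Side V, y.1 = a ∧ z.1 = b ∧ s(y, z) ∈ G.E ∧ SideOK u α v β y ∧ SideOK u α v β z

lemma split2_uadj_inl (G : BDGraph V) {u v : V} {α β : Bool} {y z : Side V}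
    (h : s(y, z) ∈ G.E) (hy : SideOK u α v β y) (hz : SideOK u α v β z) :
    (G.split2 u α v β).uadj (inl y.1) (inl z.1) := by
  have h1 := uadj_map_intro G _ (split2_E G u α v β) h
  rw [splitMap_eq_inl hy.1 hy.2, splitMap_eq_inl hz.1 hz.2] at h1
  exact h1

/-- every vertex reachable from `inl u` after splitting is an original vertex,
reachable through edges avoiding the detached sides. -/
lemma reach_inl_elim (G : BDGraph V) {u v : V} {α β : Bool}
    (hsuu : ¬ (G.split2 u α v β).uReach (inl u) (inr u))
    (hsuv : ¬ (G.split2 u α v β).uReach (inl u) (inr v)) :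
    ∀ t, (G.split2 u α v β).uReach (inl u) t →
      ∃ w : V, t = inl w ∧ Relation.ReflTransGen (pe G u α v β) u w := by
  intro t h
  induction h with
  | refl => exact ⟨u, rfl, Relation.ReflTransGen.refl⟩
  | @tail b c hreach hadj ih =>
    obtain ⟨w, rfl, hw⟩ := ih
    obtain ⟨y, z, hyz, hy1, hz1⟩ := uadj_map_elim G _ (split2_E G u α v β) hadj
    cases c with
    | inl w' =>
      obtain ⟨hyw, hyok1, hyok2⟩ := splitMap_fst_inl hy1
      obtain ⟨hzw, hzok1, hzok2⟩ := splitMap_fst_inl hz1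
      exact ⟨w', rfl, hw.tail ⟨y, z, hyw, hzw, hyz, ⟨hyok1, hyok2⟩, ⟨hzok1, hzok2⟩⟩⟩
    | inr c' =>
      rcases splitMap_fst_inr hz1 with ⟨hz, rfl⟩ | ⟨hz, rfl⟩
      · exact absurd (hreach.tail hadj) hsuu
      · exact absurd (hreach.tail hadj) hsuv

lemma nodup_head_ne_last {a v : α} {l : List α} (hnd : (a :: l).Nodup)
    (hlast : (a :: l).getLast? = some v) (hne : l ≠ []) : a ≠ v := by
  cases l with
  | nil => exact absurd rfl hne
  | cons c l' =>
    have h2 : (a :: c :: l').getLast? = (c :: l').getLast? := by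
      rw [show a :: c :: l' = [a] ++ c :: l' by simp, List.getLast?_append_cons]
    rw [h2] at hlast
    obtain ⟨h3, h4⟩ := List.mem_getLast?_eq_getLast hlast
    have hv : v ∈ c :: l' := h4 ▸ List.getLast_mem h3
    intro hav
    subst hav
    exact (List.nodup_cons.mp hnd).1 hv

/-- processing the suffix of the path after the break vertex. -/
lemma suffix_lemma (G : BDGraph V) {u v : V} {α β : Bool} (x : V) (σ' : Bool) :
    ∀ (l : List V) (b : V), List.Chain (pe G u α v β) b l →
      (b :: l).getLast? = some v → x ∉ b :: l →
      (G.split2 x σ' v β).uReach (inl b) (inl v) ∧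
        Relation.ReflTransGen (G.deleteVert x).uadj b v := by
  intro l
  induction l with
  | nil =>
    intro b _ hlast _
    have hbv : b = v := by simpa using hlast
    subst hbv
    exact ⟨Relation.ReflTransGen.refl, Relation.ReflTransGen.refl⟩
  | cons c l' ih =>
    intro b hc hlast hx
    obtain ⟨hpe, hc'⟩ := List.chain_cons.mp hc
    obtain ⟨y, z, hy1, hz1, hyz, hyok, hzok⟩ := hpe
    have hbx : b ≠ x := fun h => hx (by simp [h])
    have hcx : c ≠ x := fun h => hx (by simp [h])
    have hlast' : (c :: l').getLast? = some v := by
      rw [show b :: c :: l' = [b] ++ c :: l' by simp, List.getLast?_append_cons] at hlast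
      exact hlast
    obtain ⟨ih1, ih2⟩ := ih c hc' hlast' (fun h => hx (List.mem_cons_of_mem _ h))
    constructor
    · refine Relation.ReflTransGen.head ?_ ih1
      have hySOK : SideOK x σ' v β y :=
        ⟨fun h => hbx (by rw [← hy1, h]), hyok.2⟩
      have hzSOK : SideOK x σ' v β z :=
        ⟨fun h => hcx (by rw [← hz1, h]), hzok.2⟩
      have := split2_uadj_inl G hyz hySOK hzSOK
      rwa [hy1, hz1] at this
    · refine Relation.ReflTransGen.head ?_ ih2
      have := deleteVert_uadj_intro G (x := x) hyz (hy1 ▸ hbx) (hz1 ▸ hcx)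
      rwa [hy1, hz1] at this

end Aux6

namespace Aux6
open Sum
variable {V : Type}

lemma bool_eq_of_ne_not {a b : Bool} (h : a ≠ !b) : a = b := by
  cases a <;> cases b <;> simp_all

lemma bool_not_eq_of_ne {a b : Bool} (h : a ≠ b) : a = !b := by
  cases a <;> cases b <;> simp_all

/-- `w` lies in a component of `G − x` that meets `x` with sign `s`. -/
def CompTo (G : BDGraph V) (x : V) (s : Bool) (w : V) : Prop :=
  ∃ y : Side V, s((x, s), y) ∈ G.E ∧ y.1 ≠ x ∧ (G.deleteVert x).uReach y.1 w

lemma compTo_ne (G : BDGraph V) {x : V} {s : Bool} {w : V} (h : CompTo G x s w) :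
    w ≠ x := by
  obtain ⟨y, _, hy, hr⟩ := h
  exact deleteVert_reach_ne G hr hy

lemma reach_del_mem_verts (G : BDGraph V) {x a w : V}
    (h : (G.deleteVert x).uReach a w) (ha : a ∈ G.verts) : w ∈ G.verts := by
  induction h with
  | refl => exact ha
  | tail _ hadj _ =>
    obtain ⟨e, ⟨heE, _⟩, σ, τ, rfl⟩ := hadj
    exact G.wf _ heE _ (by rw [Sym2.mem_iff]; right; rfl)

lemma compTo_mem_verts (G : BDGraph V) {x : V} {s : Bool} {w : V} (h : CompTo G x s w) :
    w ∈ G.verts := by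
  obtain ⟨y, he, hy, hr⟩ := h
  refine reach_del_mem_verts G hr ?_
  exact G.wf _ he y (by rw [Sym2.mem_iff]; right; rfl)

lemma compTo_not_both (G : BDGraph V) {x : V} (hsc : G.SignConsistent x) {s : Bool} {w : V}
    (h1 : CompTo G x s w) (h2 : CompTo G x (!s) w) : False := by
  obtain ⟨y1, he1, hy1, hr1⟩ := h1
  obtain ⟨y2, he2, hy2, hr2⟩ := h2
  have : s = !s := sc_cmp G hsc (compTo_mem_verts G ⟨y1, he1, hy1, hr1⟩)
    (compTo_ne G ⟨y1, he1, hy1, hr1⟩)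
    ⟨y1, he1, Or.inr (BD_uReach_symm _ hr1)⟩
    ⟨y2, he2, Or.inr (BD_uReach_symm _ hr2)⟩
  simp at this

section Invariants

variable (G : BDGraph V) (u v x : V) (α β σ : Bool)

/-- Invariant for the graph `split2 u α x σ`. -/
lemma invariant12
    (huv : u ≠ v) (hxu : x ≠ u) (hxv : x ≠ v)
    (hsc : G.SignConsistent x) (huV : u ∈ G.verts) (hvV : v ∈ G.verts)
    (c1 : CompTo G x σ u) (c2 : CompTo G x (!σ) v)
    (hsuu : ¬ (G.split2 u α v β).uReach (inl u) (inr u)) :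
    ∀ t, (G.split2 u α x σ).uReach (inl u) t →
      ∃ w : V, t = inl w ∧ (G.split2 u α v β).uReach (inl u) (inl w) ∧
        (w = x ∨ CompTo G x σ w) := by
  intro t h
  induction h with
  | refl => exact ⟨u, rfl, Relation.ReflTransGen.refl, Or.inr c1⟩
  | @tail b c hreach hadj ih =>
    obtain ⟨w, rfl, hwP, hwC⟩ := ih
    obtain ⟨y, z, hyz, hy1, hz1⟩ := uadj_map_elim G _ (split2_E G u α x σ) hadj
    obtain ⟨hyw, hyo1, hyo2⟩ := splitMap_fst_inl hy1
    have hwv : w ≠ v := by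
      rintro rfl
      rcases hwC with heq | hcto
      · exact hxv heq.symm
      · exact compTo_not_both G hsc hcto c2
    have hyv : y ≠ (v, !β) := fun h => hwv (by rw [← hyw, h])
    cases c with
    | inr c' =>
      exfalso
      rcases splitMap_fst_inr hz1 with ⟨rfl, -⟩ | ⟨rfl, -⟩
      · -- stepping to `inr u` : contradiction with separability
        have hadjP : (G.split2 u α v β).uadj (inl w) (inr u) := by
          have h1 := uadj_map_intro G _ (split2_E G u α v β) hyz
          rw [splitMap_eq_inl hyo1 hyv] at h1
          rw [show splitMap u α v β (u, !α) = (inr u, !α) by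
            unfold splitMap; rw [if_pos rfl]] at h1
          rw [hyw] at h1
          exact h1
        exact hsuu (hwP.tail hadjP)
      · -- stepping to `inr x` : contradiction with sign-consistency
        rcases hwC with heq | hcto
        · -- mixed loop at x
          have hyx : y.1 = x := by rw [hyw, heq]
          have hys : y.2 = σ := by
            by_contra h
            exact hyo2 (Prod.ext hyx (bool_not_eq_of_ne h))
          have hy' : y = (x, σ) := Prod.ext hyx hys
          rw [hy'] at hyz
          exact sc_no_mixed_loop G hsc hyz
        · obtain ⟨y₀, he₀, hy₀, hr₀⟩ := hcto
          have hwx : w ≠ x := compTo_ne G ⟨y₀, he₀, hy₀, hr₀⟩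
          have hwmem : w ∈ G.verts := by
            rw [← hyw]; exact vert_mem G hyz
          have hcmp : σ = !σ := sc_cmp G hsc hwmem hwx
            ⟨y₀, he₀, Or.inr (BD_uReach_symm _ hr₀)⟩
            ⟨y, by rwa [Sym2.eq_swap] at hyz,
              Or.inr (by rw [hyw]; exact Relation.ReflTransGen.refl)⟩
          simp at hcmp
    | inl w' =>
      obtain ⟨hzw, hzo1, hzo2⟩ := splitMap_fst_inl hz1
      have hC' : w' = x ∨ CompTo G x σ w' := by
        by_cases hw'x : w' = x
        · exact Or.inl hw'x
        · right
          rcases hwC with heq | ⟨y₀, he₀, hy₀, hr₀⟩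
          · have hyx : y.1 = x := by rw [hyw, heq]
            have hys : y.2 = σ := by
              by_contra h
              exact hyo2 (Prod.ext hyx (bool_not_eq_of_ne h))
            have hy' : y = (x, σ) := Prod.ext hyx hys
            refine ⟨z, by rwa [hy'] at hyz, by rw [hzw]; exact hw'x, ?_⟩
            rw [hzw]
            exact Relation.ReflTransGen.refl
          · refine ⟨y₀, he₀, hy₀, hr₀.tail ?_⟩
            have hwx : w ≠ x := deleteVert_reach_ne G hr₀ hy₀
            have hst := deleteVert_uadj_intro G hyz (by rw [hyw]; exact hwx)
              (by rw [hzw]; exact hw'x)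
            rwa [hyw, hzw] at hst
      have hw'v : w' ≠ v := by
        rintro rfl
        rcases hC' with heq | hcto
        · exact hxv heq.symm
        · exact compTo_not_both G hsc hcto c2
      have hzv : z ≠ (v, !β) := fun h => hw'v (by rw [← hzw, h])
      have hstep : (G.split2 u α v β).uadj (inl w) (inl w') := by
        have hst := split2_uadj_inl G hyz ⟨hyo1, hyv⟩ ⟨hzo1, hzv⟩
        rwa [hyw, hzw] at hst
      exact ⟨w', rfl, hwP.tail hstep, hC'⟩

end Invariants
end Aux6

namespace Aux6
open Sum
variable {V : Type}

lemma splitMap_vside {u v : V} {α β : Bool} (huv : u ≠ v) :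
    splitMap u α v β (v, !β) = (inr v, !β) := by
  unfold splitMap
  rw [if_neg (fun h => huv (congrArg Prod.fst h).symm), if_pos rfl]

section Invariants2

variable (G : BDGraph V) (u v x : V) (α β σ : Bool)

/-- Invariant for the graph `split2 x (!σ) v β`. -/
lemma invariant34
    (huv : u ≠ v) (hxu : x ≠ u) (hxv : x ≠ v)
    (hsc : G.SignConsistent x) (huV : u ∈ G.verts) (hvV : v ∈ G.verts)
    (c1 : CompTo G x σ u) (c2 : CompTo G x (!σ) v)
    (hI1 : (G.split2 u α v β).uReach (inl u) (inl x))
    (hsuv : ¬ (G.split2 u α v β).uReach (inl u) (inr v)) :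
    ∀ t, (G.split2 x (!σ) v β).uReach (inl x) t →
      ∃ w : V, t = inl w ∧ (G.split2 u α v β).uReach (inl u) (inl w) ∧
        (w = x ∨ CompTo G x (!σ) w) := by
  intro t h
  induction h with
  | refl => exact ⟨x, rfl, hI1, Or.inl rfl⟩
  | @tail b c hreach hadj ih =>
    obtain ⟨w, rfl, hwP, hwC⟩ := ih
    obtain ⟨y, z, hyz, hy1, hz1⟩ := uadj_map_elim G _ (split2_E G x (!σ) v β) hadj
    obtain ⟨hyw, hyo1, hyo2⟩ := splitMap_fst_inl hy1
    have hwu : w ≠ u := by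
      rintro rfl
      rcases hwC with heq | hcto
      · exact hxu heq.symm
      · exact compTo_not_both G hsc c1 hcto
    have hyu : y ≠ (u, !α) := fun h => hwu (by rw [← hyw, h])
    cases c with
    | inr c' =>
      exfalso
      rcases splitMap_fst_inr hz1 with ⟨rfl, -⟩ | ⟨rfl, -⟩
      · -- stepping to `inr x` : contradiction with sign-consistency
        rcases hwC with heq | hcto
        · have hyx : y.1 = x := by rw [hyw, heq]
          have hys : y.2 = !σ := bool_eq_of_ne_not (fun h => hyo1 (Prod.ext hyx h))
          have hy' : y = (x, !σ) := Prod.ext hyx hys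
          rw [hy'] at hyz
          exact sc_no_mixed_loop G hsc hyz
        · obtain ⟨y₀, he₀, hy₀, hr₀⟩ := hcto
          have hwx : w ≠ x := compTo_ne G ⟨y₀, he₀, hy₀, hr₀⟩
          have hwmem : w ∈ G.verts := by
            rw [← hyw]; exact vert_mem G hyz
          have hcmp : (!σ) = !(!σ) := sc_cmp G hsc hwmem hwx
            ⟨y₀, he₀, Or.inr (BD_uReach_symm _ hr₀)⟩
            ⟨y, by rwa [Sym2.eq_swap] at hyz,
              Or.inr (by rw [hyw]; exact Relation.ReflTransGen.refl)⟩
          simp at hcmp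
      · -- stepping to `inr v` : contradiction with separability
        have hadjP : (G.split2 u α v β).uadj (inl w) (inr v) := by
          have h1 := uadj_map_intro G _ (split2_E G u α v β) hyz
          rw [splitMap_eq_inl hyu hyo2, splitMap_vside huv, hyw] at h1
          exact h1
        exact hsuv (hwP.tail hadjP)
    | inl w' =>
      obtain ⟨hzw, hzo1, hzo2⟩ := splitMap_fst_inl hz1
      have hC' : w' = x ∨ CompTo G x (!σ) w' := by
        by_cases hw'x : w' = x
        · exact Or.inl hw'x
        · right
          rcases hwC with heq | ⟨y₀, he₀, hy₀, hr₀⟩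
          · have hyx : y.1 = x := by rw [hyw, heq]
            have hys : y.2 = !σ := bool_eq_of_ne_not (fun h => hyo1 (Prod.ext hyx h))
            have hy' : y = (x, !σ) := Prod.ext hyx hys
            refine ⟨z, by rwa [hy'] at hyz, by rw [hzw]; exact hw'x, ?_⟩
            rw [hzw]
            exact Relation.ReflTransGen.refl
          · refine ⟨y₀, he₀, hy₀, hr₀.tail ?_⟩
            have hwx : w ≠ x := deleteVert_reach_ne G hr₀ hy₀
            have hst := deleteVert_uadj_intro G hyz (by rw [hyw]; exact hwx)
              (by rw [hzw]; exact hw'x)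
            rwa [hyw, hzw] at hst
      have hw'u : w' ≠ u := by
        rintro rfl
        rcases hC' with heq | hcto
        · exact hxu heq.symm
        · exact compTo_not_both G hsc c1 hcto
      have hzu : z ≠ (u, !α) := fun h => hw'u (by rw [← hzw, h])
      have hstep : (G.split2 u α v β).uadj (inl w) (inl w') := by
        have hst := split2_uadj_inl G hyz ⟨hyu, hyo2⟩ ⟨hzu, hzo2⟩
        rwa [hyw, hzw] at hst
      exact ⟨w', rfl, hwP.tail hstep, hC'⟩

end Invariants2
end Aux6

namespace Aux6
open Sum
variable {V : Type}

lemma getLast?_cons_tail {a b : α} {l : List α} {v : α}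
    (h : (a :: b :: l).getLast? = some v) : (b :: l).getLast? = some v := by
  rwa [show a :: b :: l = [a] ++ b :: l by simp, List.getLast?_append_cons] at h

lemma master (G : BDGraph V) (u v : V) (α β : Bool)
    (huv : u ≠ v) (huV : u ∈ G.verts) (hvV : v ∈ G.verts)
    (hsuu : ¬ (G.split2 u α v β).uReach (inl u) (inr u))
    (hsuv : ¬ (G.split2 u α v β).uReach (inl u) (inr v))
    (Hdisc : ¬ G.splitAll.uReach (scKey G (u, α)) (scKey G (v, β)))
    (hmin : ¬ ∃ w ∈ SnarlVerts G u α v β, w ≠ u ∧ w ≠ v ∧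
        ∃ γ : Bool, Separable G u α w γ ∧ Separable G w (!γ) v β) :
    ∀ (l : List V) (a : V) (ρ : Bool),
      List.Chain (pe G u α v β) a l →
      (a :: l).getLast? = some v →
      (a :: l).Nodup →
      u ∉ l →
      (a = u → ρ = α) →
      SideOK u α v β (a, ρ) →
      (G.split2 u α v β).uReach (inl u) (inl a) →
      G.splitAll.uReach (scKey G (u, α)) (scKey G (a, ρ)) →
      (∀ c τ, (c ∈ l ∨ (c = a ∧ τ = ρ)) → (G.split2 u α c τ).uReach (inl u) (inl a)) →
      (∀ c, c ∈ l → (G.deleteVert c).uReach u a) →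
      (a = u ∨ ∃ y : Side V, s(y, (a, ρ)) ∈ G.E ∧ y.1 ≠ a ∧ (G.deleteVert a).uReach u y.1) →
      False := by
  intro l
  induction l with
  | nil =>
    intro a ρ _ hlast _ _ _ hOK _ hI2 _ _ _
    have hav : a = v := by simpa using hlast
    subst hav
    have hρ : ρ = β := bool_eq_of_ne_not (fun h => hOK.2 (by rw [h]))
    rw [hρ] at hI2
    exact Hdisc hI2
  | cons b l' ih =>
    intro a ρ hc hlast hnd hul hI6 hOK hI1 hI2 hI3 hI4 hI5
    obtain ⟨hpe, hc'⟩ := List.chain_cons.mp hc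
    obtain ⟨y, z, hy1, hz1, hyz, hyok, hzok⟩ := hpe
    have hy' : y = (a, y.2) := Prod.ext hy1 rfl
    have hz' : z = (b, z.2) := Prod.ext hz1 rfl
    rw [hy'] at hyz hyok
    rw [hz'] at hyz hzok
    have hbu : b ≠ u := fun h => hul (by rw [← h]; exact List.mem_cons_self)
    have hav : a ≠ v := nodup_head_ne_last hnd hlast (by simp)
    have hlast' : (b :: l').getLast? = some v := getLast?_cons_tail hlast
    have hnd' : (b :: l').Nodup := (List.nodup_cons.mp hnd).2
    have hanotin : a ∉ b :: l' := (List.nodup_cons.mp hnd).1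
    have hba : b ≠ a := fun h => hanotin (by rw [← h]; exact List.mem_cons_self)
    have hbninl' : b ∉ l' := (List.nodup_cons.mp hnd').1
    by_cases hbrk : G.SignConsistent a ∧ y.2 ≠ ρ
    · -- ===== BREAK at a, with arrival sign ρ and departure !ρ =====
      obtain ⟨hsc, hdep⟩ := hbrk
      have hdep' : y.2 = !ρ := bool_not_eq_of_ne hdep
      rw [hdep'] at hyz
      have hau : a ≠ u := by
        intro h
        have hρα := hI6 h
        apply hyok.1
        rw [hy', h, hdep', hρα]
      have c1 : CompTo G a ρ u := by
        rcases hI5 with h | ⟨y₀, he₀, hy₀, hr₀⟩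
        · exact absurd h hau
        · exact ⟨y₀, by rwa [Sym2.eq_swap] at he₀, hy₀, BD_uReach_symm _ hr₀⟩
      obtain ⟨hsfx1, hsfx2⟩ := suffix_lemma G a (!ρ) l' b hc' hlast' hanotin
      have c2 : CompTo G a (!ρ) v := ⟨(b, z.2), hyz, hba, hsfx2⟩
      have R1 : (G.split2 u α a ρ).uReach (inl u) (inl a) :=
        hI3 a ρ (Or.inr ⟨rfl, rfl⟩)
      have hbnn : (!ρ) ≠ !(!ρ) := by cases ρ <;> simp
      have stepR2 : (G.split2 a (!ρ) v β).uadj (inl a) (inl b) := by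
        have hst := split2_uadj_inl G hyz
          ⟨fun h => hbnn (congrArg Prod.snd h), fun h => hav (congrArg Prod.fst h)⟩
          ⟨fun h => hba (congrArg Prod.fst h), hzok.2⟩
        exact hst
      have R2 : (G.split2 a (!ρ) v β).uReach (inl a) (inl v) :=
        Relation.ReflTransGen.head stepR2 hsfx1
      have N1 : ¬ (G.split2 u α a ρ).uReach (inl u) (inr u) := by
        intro h
        obtain ⟨w, heq, -, -⟩ := invariant12 G u v a α β ρ huv hau hav hsc huV hvV
          c1 c2 hsuu _ h
        simp at heq
      have N2 : ¬ (G.split2 u α a ρ).uReach (inl u) (inr a) := by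
        intro h
        obtain ⟨w, heq, -, -⟩ := invariant12 G u v a α β ρ huv hau hav hsc huV hvV
          c1 c2 hsuu _ h
        simp at heq
      have N3 : ¬ (G.split2 a (!ρ) v β).uReach (inl a) (inr a) := by
        intro h
        obtain ⟨w, heq, -, -⟩ := invariant34 G u v a α β ρ huv hau hav hsc huV hvV
          c1 c2 hI1 hsuv _ h
        simp at heq
      have N4 : ¬ (G.split2 a (!ρ) v β).uReach (inl a) (inr v) := by
        intro h
        obtain ⟨w, heq, -, -⟩ := invariant34 G u v a α β ρ huv hau hav hsc huV hvV
          c1 c2 hI1 hsuv _ h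
        simp at heq
      have sep1 : Separable G u α a ρ := by
        refine ⟨fun h => hau h.symm, R1, N1, N2, ?_, ?_⟩
        · exact fun h => N1 (BD_uReach_trans _ R1 h)
        · exact fun h => N2 (BD_uReach_trans _ R1 h)
      have sep2 : Separable G a (!ρ) v β := by
        refine ⟨hav, R2, N3, N4, ?_, ?_⟩
        · exact fun h => N3 (BD_uReach_trans _ R2 h)
        · exact fun h => N4 (BD_uReach_trans _ R2 h)
      exact hmin ⟨a, hI1, hau, hav, ρ, sep1, sep2⟩
    · -- ===== NO BREAK : continue along the path =====
      have hkey : scKey G (a, ρ) = scKey G (a, y.2) := by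
        by_cases hsc : G.SignConsistent a
        · have hyρ : y.2 = ρ := by
            by_contra h
            exact hbrk ⟨hsc, h⟩
          rw [hyρ]
        · rw [scKey_pair, scKey_pair, if_neg hsc, if_neg hsc]
      refine ih b z.2 hc' hlast' hnd'
        (fun h => hul (List.mem_cons_of_mem _ h))
        (fun h => absurd h hbu) hzok ?_ ?_ ?_ ?_ ?_
      · -- I1
        exact hI1.tail (split2_uadj_inl G hyz hyok hzok)
      · -- I2
        refine hI2.tail ?_
        rw [hkey]
        exact splitAll_uadj_intro G hyz
      · -- I3
        intro c τ hcase
        rcases hcase with hcl | ⟨hcb2, htau⟩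
        · have hca : c ≠ a := fun h => hanotin (h ▸ List.mem_cons_of_mem _ hcl)
          have hcb : c ≠ b := fun h => hbninl' (h ▸ hcl)
          refine (hI3 c τ (Or.inl (List.mem_cons_of_mem _ hcl))).tail ?_
          exact split2_uadj_inl G hyz
            ⟨hyok.1, fun h => hca (congrArg Prod.fst h).symm⟩
            ⟨hzok.1, fun h => hcb (congrArg Prod.fst h).symm⟩
        · rw [hcb2, htau]
          refine (hI3 b z.2 (Or.inl (List.mem_cons_self))).tail ?_
          have hzne : z.2 ≠ !z.2 := by cases z.2 <;> simp
          exact split2_uadj_inl G hyz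
            ⟨hyok.1, fun h => hba ((congrArg Prod.fst h).symm)⟩
            ⟨hzok.1, fun h => hzne (congrArg Prod.snd h)⟩
      · -- I4
        intro c hcl
        have hca : c ≠ a := fun h => hanotin (h ▸ List.mem_cons_of_mem _ hcl)
        have hcb : c ≠ b := fun h => hbninl' (h ▸ hcl)
        refine (hI4 c (List.mem_cons_of_mem _ hcl)).tail ?_
        exact deleteVert_uadj_intro G hyz (fun h => hca h.symm) (fun h => hcb h.symm)
      · -- I5
        right
        exact ⟨(a, y.2), hyz, fun h => hba h.symm, hI4 b (List.mem_cons_self)⟩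

end Aux6

/-- If `F1` and `F2` are distinct sign-cut graphs of `G`, `u α` is a
vertex-side of `F1` and `v β` is a vertex-side of `F2`, then `{u α, v β}` is not a
snarl of `G`. -/
theorem statement_6 (G F1 F2 : BDGraph V)
    (h1 : IsSignCutGraph G F1) (h2 : IsSignCutGraph G F2)
    (hne : ¬ (F1.verts = F2.verts ∧ F1.E = F2.E))
    (u v : V) (α β : Bool)
    (hu : F1.HasSide u α) (hv : F2.HasSide v β) :
    ¬ IsSnarl G u α v β := by
  open Aux6 Sum in
  rintro ⟨⟨huv, hreach, hsuu, hsuv, hsvu, hsvv⟩, hmin⟩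
  obtain ⟨p1, hp1, hFv1, hFe1⟩ := h1
  obtain ⟨p2, hp2, hFv2, hFe2⟩ := h2
  obtain ⟨e1, he1, hue1⟩ := hu
  obtain ⟨e2, he2, hve2⟩ := hv
  rw [hFe1] at he1
  rw [hFe2] at he2
  obtain ⟨he1G, hall1⟩ := he1
  obtain ⟨he2G, hall2⟩ := he2
  have hp1u : G.splitAll.uReach p1 (scKey G (u, α)) := hall1 _ hue1
  have hp2v : G.splitAll.uReach p2 (scKey G (v, β)) := hall2 _ hve2
  have huV : u ∈ G.verts := G.wf _ he1G _ hue1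
  have hvV : v ∈ G.verts := G.wf _ he2G _ hve2
  have Hdisc : ¬ G.splitAll.uReach (scKey G (u, α)) (scKey G (v, β)) := by
    intro hr
    have hp12 : G.splitAll.uReach p1 p2 :=
      BD_uReach_trans _ (BD_uReach_trans _ hp1u hr) (BD_uReach_symm _ hp2v)
    refine hne ⟨?_, ?_⟩
    · rw [hFv1, hFv2]
      ext w
      constructor
      · rintro ⟨σ, hx, hrx⟩
        exact ⟨σ, hx, BD_uReach_trans _ (BD_uReach_symm _ hp12) hrx⟩
      · rintro ⟨σ, hx, hrx⟩
        exact ⟨σ, hx, BD_uReach_trans _ hp12 hrx⟩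
    · rw [hFe1, hFe2]
      ext e
      constructor
      · rintro ⟨heG, hy⟩
        exact ⟨heG, fun y hy' => BD_uReach_trans _ (BD_uReach_symm _ hp12) (hy y hy')⟩
      · rintro ⟨heG, hy⟩
        exact ⟨heG, fun y hy' => BD_uReach_trans _ hp12 (hy y hy')⟩
  have hrt : Relation.ReflTransGen (pe G u α v β) u v := by
    obtain ⟨w, heq, h⟩ := reach_inl_elim G hsuu hsuv _ hreach
    obtain rfl : v = w := by simpa using heq
    exact h
  obtain ⟨l, hchain, hlast, hnd⟩ := exists_nodup_chain hrt
  have hαα : α ≠ !α := by cases α <;> simp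
  exact master G u v α β huv huV hvV hsuu hsuv Hdisc hmin l u α hchain hlast hnd
    (fun h => (List.nodup_cons.mp hnd).1 h) (fun _ => rfl)
    ⟨fun h => hαα (congrArg Prod.snd h), fun h => huv (congrArg Prod.fst h)⟩
    Relation.ReflTransGen.refl Relation.ReflTransGen.refl
    (fun c τ _ => Relation.ReflTransGen.refl)
    (fun c _ => Relation.ReflTransGen.refl) (Or.inl rfl)

end Paper
end

section
/- Let G be a bidirected graph, let F be a sign-cut graph of G, and let u ∈ V(F). If u is not a tip in F, then there is a block of F having vertex-sides of opposite signs at u. -/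
/-!
Bidirected graphs.  A vertex-side is a vertex with a sign (`true` = `+`, `false` = `−`);
a bidirected edge is an unordered pair of vertex-sides (an element of `Sym2 (V × Bool)`).
-/

namespace Paper

variable {V : Type}

section Aux
open BDGraph

lemma uadj_symm {G : BDGraph V} {a b : V} (h : G.uadj a b) : G.uadj b a := by
  obtain ⟨e, he, σ, τ, rfl⟩ := h
  exact ⟨_, he, τ, σ, Sym2.eq_swap⟩

lemma uReach_symm {G : BDGraph V} {a b : V} (h : G.uReach a b) : G.uReach b a := by
  induction h with
  | refl => exact Relation.ReflTransGen.refl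
  | tail _ hbc ih => exact Relation.ReflTransGen.head (uadj_symm hbc) ih

lemma uReach_mono {G H : BDGraph V} (hE : G.E ⊆ H.E) {a b : V} (h : G.uReach a b) :
    H.uReach a b := by
  refine Relation.ReflTransGen.mono ?_ _ _ h
  rintro x y ⟨e, he, σ, τ, rfl⟩
  exact ⟨_, hE he, σ, τ, rfl⟩

lemma mem_other {x : Side V} {e : Sym2 (Side V)} (h : x ∈ e) : ∃ y, e = s(x, y) :=
  ⟨Sym2.Mem.other h, (Sym2.other_spec h).symm⟩

lemma chain'_head_uReach {G : BDGraph V} :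
    ∀ {l : List V} {c : V}, List.Chain' G.uadj (c :: l) → ∀ a ∈ c :: l, G.uReach c a := by
  intro l
  induction l with
  | nil => intro c _ a ha; rw [List.mem_singleton] at ha; subst ha; exact .refl
  | cons d t ih =>
    intro c hch a ha
    replace hch := List.isChain_cons_cons.1 hch
    rcases List.mem_cons.1 ha with rfl | ha
    · exact .refl
    · exact .head hch.1 (ih hch.2 a ha)

lemma chain'_mem_uReach {G : BDGraph V} {l : List V} (h : List.Chain' G.uadj l)
    {a b : V} (ha : a ∈ l) (hb : b ∈ l) : G.uReach a b := by
  cases l with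
  | nil => simp at ha
  | cons c t =>
    exact .trans (uReach_symm (chain'_head_uReach h a ha)) (chain'_head_uReach h b hb)

lemma uReach_mem_verts {G : BDGraph V} {a b : V} (h : G.uReach a b) (ha : a ∈ G.verts) :
    b ∈ G.verts := by
  induction h with
  | refl => exact ha
  | tail _ hbc ih =>
    obtain ⟨e, he, σ, τ, rfl⟩ := hbc
    exact G.wf _ he _ (Sym2.mem_mk_right _ _)

lemma exists_simple_path {G : BDGraph V} {a b : V} (h : G.uReach a b) :
    ∃ l : List V, l ≠ [] ∧ l.head? = some a ∧ l.getLast? = some b ∧ l.Nodup ∧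
      l.Chain' G.uadj := by
  classical
  let SG : SimpleGraph V :=
    { Adj := fun x y => x ≠ y ∧ G.uadj x y
      symm := ⟨by rintro x y ⟨hxy, hadj⟩; exact ⟨hxy.symm, uadj_symm hadj⟩⟩
      loopless := ⟨by rintro x ⟨hx, -⟩; exact hx rfl⟩ }
  have hreach : SG.Reachable a b := by
    rw [SimpleGraph.reachable_iff_reflTransGen]
    induction h with
    | refl => exact .refl
    | tail _ hbc ih =>
      rename_i b' c' _
      by_cases hbc' : b' = c'
      · exact hbc' ▸ ih
      · exact ih.tail ⟨hbc', hbc⟩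
  obtain ⟨w⟩ := hreach
  refine ⟨w.toPath.1.support, w.toPath.1.support_ne_nil, ?_, ?_,
    w.toPath.2.support_nodup, ?_⟩
  · rw [SimpleGraph.Walk.support_eq_cons]; rfl
  · rw [List.getLast?_eq_getLast w.toPath.1.support_ne_nil,
      SimpleGraph.Walk.getLast_support]
  · exact (SimpleGraph.Walk.isChain_adj_support _).imp (fun _ _ h => h.2)

/-- The property of being a candidate block with both signs at `u`. -/
def Good (F : BDGraph V) (u : V) (H : BDGraph V) : Prop :=
  H.IsSubgraphOf F ∧ H.Conn ∧ (∀ x, ¬ H.IsCutvertex x) ∧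
    H.HasSide u true ∧ H.HasSide u false

lemma zorn_block (F : BDGraph V) (u : V) (hex : ∃ H, Good F u H) :
    ∃ H : BDGraph V, IsBlock F H ∧ H.HasSide u true ∧ H.HasSide u false := by
  classical
  obtain ⟨H0, hH0⟩ := hex
  set T : Set (Set V × Set (Sym2 (Side V))) :=
    {s | ∃ hwf : ∀ e ∈ s.2, ∀ y ∈ e, Prod.fst y ∈ s.1,
      Good F u ⟨s.1, s.2, hwf⟩} with hT
  have hx0 : (H0.verts, H0.E) ∈ T := ⟨H0.wf, hH0⟩
  have ih : ∀ c ⊆ T, IsChain (· ≤ ·) c → ∀ y ∈ c, ∃ ub ∈ T, ∀ z ∈ c, z ≤ ub := by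
    intro c hcT hchain y hy
    -- the union of the chain
    set Uv : Set V := ⋃ s ∈ c, s.1 with hUv
    set Ue : Set (Sym2 (Side V)) := ⋃ s ∈ c, s.2 with hUe
    have hwfU : ∀ e ∈ Ue, ∀ z ∈ e, Prod.fst z ∈ Uv := by
      intro e he z hz
      rw [hUe, Set.mem_iUnion₂] at he
      obtain ⟨s, hs, hes⟩ := he
      exact Set.mem_iUnion₂.2 ⟨s, hs, (hcT hs).choose e hes z hz⟩
    set HU : BDGraph V := ⟨Uv, Ue, hwfU⟩ with hHU
    have hBs : ∀ s (hs : s ∈ c), Good F u ⟨s.1, s.2, (hcT hs).choose⟩ :=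
      fun s hs => (hcT hs).choose_spec
    have hmono : ∀ s ∈ c, s.1 ⊆ Uv ∧ s.2 ⊆ Ue := by
      intro s hs
      constructor
      · exact fun v hv => Set.mem_iUnion₂.2 ⟨s, hs, hv⟩
      · exact fun e he => Set.mem_iUnion₂.2 ⟨s, hs, he⟩
    -- a reachability in the union happens inside a single member
    have hunion_reach : ∀ a b : V, HU.uReach a b → a = b ∨
        ∃ s, ∃ hs : s ∈ c, BDGraph.uReach ⟨s.1, s.2, (hcT hs).choose⟩ a b ∧
          a ∈ s.1 ∧ b ∈ s.1 := by
      intro a b hr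
      induction hr with
      | refl => exact Or.inl rfl
      | @tail b' c' hab hbc ihr =>
        obtain ⟨e, he, σ, τ, rfl⟩ := hbc
        obtain ⟨s₂, hs₂, hes₂⟩ := Set.mem_iUnion₂.1 he
        have hb' : b' ∈ s₂.1 := (hcT hs₂).choose _ hes₂ _ (Sym2.mem_mk_left _ _)
        have hc' : c' ∈ s₂.1 := (hcT hs₂).choose _ hes₂ _ (Sym2.mem_mk_right _ _)
        rcases ihr with rfl | ⟨s₁, hs₁, hr₁, ha₁, hb₁⟩
        · exact Or.inr ⟨s₂, hs₂, Relation.ReflTransGen.single ⟨_, hes₂, σ, τ, rfl⟩,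
            hb', hc'⟩
        · rcases eq_or_ne s₁ s₂ with rfl | hne
          · exact Or.inr ⟨s₁, hs₁, hr₁.tail ⟨_, hes₂, σ, τ, rfl⟩, ha₁, hc'⟩
          rcases hchain.total hs₁ hs₂ with hle | hle
          · exact Or.inr ⟨s₂, hs₂,
              (uReach_mono (G := ⟨s₁.1, s₁.2, (hcT hs₁).choose⟩) hle.2 hr₁).tail
                ⟨_, hes₂, σ, τ, rfl⟩, hle.1 ha₁, hc'⟩
          · exact Or.inr ⟨s₁, hs₁, hr₁.tail ⟨_, hle.2 hes₂, σ, τ, rfl⟩, ha₁, hle.1 hc'⟩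
    refine ⟨(Uv, Ue), ⟨hwfU, ?_, ?_, ?_, ?_, ?_⟩, ?_⟩
    · -- subgraph of F
      constructor
      · intro v hv
        obtain ⟨s, hs, hvs⟩ := Set.mem_iUnion₂.1 hv
        exact (hBs s hs).1.1 hvs
      · intro e he
        obtain ⟨s, hs, hes⟩ := Set.mem_iUnion₂.1 he
        exact (hBs s hs).1.2 hes
    · -- connected
      constructor
      · obtain ⟨v, hv⟩ := (hBs y hy).2.1.1
        exact ⟨v, (hmono y hy).1 hv⟩
      · intro a ha b hb
        obtain ⟨s₁, hs₁, ha₁⟩ := Set.mem_iUnion₂.1 ha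
        obtain ⟨s₂, hs₂, hb₂⟩ := Set.mem_iUnion₂.1 hb
        rcases eq_or_ne s₁ s₂ with rfl | hne
        · exact uReach_mono (hmono s₁ hs₁).2 ((hBs s₁ hs₁).2.1.2 a ha₁ b hb₂)
        rcases hchain.total hs₁ hs₂ with hle | hle
        · exact uReach_mono (hmono s₂ hs₂).2 ((hBs s₂ hs₂).2.1.2 a (hle.1 ha₁) b hb₂)
        · exact uReach_mono (hmono s₁ hs₁).2 ((hBs s₁ hs₁).2.1.2 a ha₁ b (hle.1 hb₂))
    · -- no cutvertex
      rintro x ⟨hx, a, ha, b, hb, hax, hbx, hr, hnr⟩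
      rcases eq_or_ne a b with rfl | hab
      · exact hnr Relation.ReflTransGen.refl
      rcases hunion_reach a b hr with rfl | ⟨s₁, hs₁, hr₁, ha₁, hb₁⟩
      · exact hab rfl
      obtain ⟨s₂, hs₂, hx₂⟩ := Set.mem_iUnion₂.1 hx
      -- choose the bigger of s₁, s₂
      have key : ∀ s, ∀ hs : s ∈ c, a ∈ s.1 → b ∈ s.1 → x ∈ s.1 →
          BDGraph.uReach ⟨s.1, s.2, (hcT hs).choose⟩ a b → False := by
        intro s hs has hbs hxs hrs
        refine (hBs s hs).2.2.1 x ⟨hxs, a, has, b, hbs, hax, hbx, hrs, ?_⟩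
        intro hcon
        refine hnr (uReach_mono ?_ hcon)
        rintro e ⟨hes, hne⟩
        exact ⟨(hmono s hs).2 hes, hne⟩
      rcases eq_or_ne s₁ s₂ with rfl | hne
      · exact key s₁ hs₁ ha₁ hb₁ hx₂ hr₁
      rcases hchain.total hs₁ hs₂ with hle | hle
      · exact key s₂ hs₂ (hle.1 ha₁) (hle.1 hb₁) hx₂
          (uReach_mono (G := ⟨s₁.1, s₁.2, (hcT hs₁).choose⟩) hle.2 hr₁)
      · exact key s₁ hs₁ ha₁ hb₁ (hle.1 hx₂) hr₁
    · obtain ⟨e, he, hmem⟩ := (hBs y hy).2.2.2.1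
      exact ⟨e, (hmono y hy).2 he, hmem⟩
    · obtain ⟨e, he, hmem⟩ := (hBs y hy).2.2.2.2
      exact ⟨e, (hmono y hy).2 he, hmem⟩
    · intro z hz
      exact ⟨(hmono z hz).1, (hmono z hz).2⟩
  obtain ⟨m, hle0, hmem, hmax⟩ := zorn_le_nonempty₀ T ih (H0.verts, H0.E) hx0
  obtain ⟨hwfm, hGm⟩ := hmem
  refine ⟨⟨m.1, m.2, hwfm⟩, ⟨hGm.1, hGm.2.1, hGm.2.2.1, ?_⟩, hGm.2.2.2.1, hGm.2.2.2.2⟩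
  intro H' hsub' hsub hconn' hnc'
  have hz : (H'.verts, H'.E) ∈ T := by
    refine ⟨H'.wf, hsub', hconn', hnc', ?_, ?_⟩
    · obtain ⟨e, he, hmem⟩ := hGm.2.2.2.1
      exact ⟨e, hsub.2 he, hmem⟩
    · obtain ⟨e, he, hmem⟩ := hGm.2.2.2.2
      exact ⟨e, hsub.2 he, hmem⟩
  have hmz : m ≤ (H'.verts, H'.E) := ⟨hsub.1, hsub.2⟩
  have := hmax hz hmz
  exact ⟨Set.Subset.antisymm this.1 hmz.1, Set.Subset.antisymm this.2 hmz.2⟩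

end Aux

section Cycle
open BDGraph

/-- `c, d` occur consecutively in `l`. -/
def Consec (l : List V) (c d : V) : Prop := ∃ l₁ l₂ : List V, l = l₁ ++ c :: d :: l₂

lemma consec_mem {l : List V} {c d : V} (h : Consec l c d) : c ∈ l ∧ d ∈ l := by
  obtain ⟨l₁, l₂, rfl⟩ := h
  constructor
  · simp
  · simp

lemma consec_of_chain {R : V → V → Prop} {l : List V} (h : List.Chain' R l) {c d : V}
    (hc : Consec l c d) : R c d := by
  obtain ⟨l₁, l₂, rfl⟩ := hc
  have : List.Chain' R (c :: d :: l₂) := h.infix ⟨l₁, [], by simp⟩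
  exact (List.isChain_cons_cons.1 this).1

lemma chain'_of_consec {R : V → V → Prop} :
    ∀ {m : List V}, (∀ c d, Consec m c d → R c d) → List.Chain' R m := by
  intro m
  induction m with
  | nil => intro _; exact List.isChain_nil
  | cons a t ih =>
    intro h
    cases t with
    | nil => exact List.isChain_singleton a
    | cons b t' =>
      refine List.isChain_cons_cons.2 ⟨h a b ⟨[], t', rfl⟩, ih ?_⟩
      rintro c d ⟨m₁, m₂, hm⟩
      exact h c d ⟨a :: m₁, m₂, by rw [hm]; rfl⟩

lemma mem_consec {l : List V} {v : V} (hv : v ∈ l) :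
    l = [v] ∨ ∃ c d, Consec l c d ∧ (v = c ∨ v = d) := by
  induction l with
  | nil => simp at hv
  | cons a t ih =>
    rcases List.mem_cons.1 hv with rfl | hv'
    · cases t with
      | nil => exact Or.inl rfl
      | cons b t' => exact Or.inr ⟨v, b, ⟨[], t', rfl⟩, Or.inl rfl⟩
    · rcases ih hv' with rfl | ⟨c, d, ⟨m₁, m₂, hm⟩, hcd⟩
      · exact Or.inr ⟨a, v, ⟨[], [], rfl⟩, Or.inr rfl⟩
      · exact Or.inr ⟨c, d, ⟨a :: m₁, m₂, by rw [hm]; rfl⟩, hcd⟩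

lemma consec_append_left {l₁ : List V} {rest : List V} {c d : V}
    (h : Consec l₁ c d) : Consec (l₁ ++ rest) c d := by
  obtain ⟨m₁, m₂, rfl⟩ := h
  exact ⟨m₁, m₂ ++ rest, by simp⟩

lemma consec_append_right {l₁ : List V} {rest : List V} {c d : V}
    (h : Consec rest c d) : Consec (l₁ ++ rest) c d := by
  obtain ⟨m₁, m₂, rfl⟩ := h
  exact ⟨l₁ ++ m₁, m₂, by simp⟩

lemma cycle_good (F : BDGraph V) (u : V) {e f : Sym2 (Side V)} {σ : Bool} {y z : Side V}
    (he : e ∈ F.E) (hf : f ∈ F.E) (hee : e = s((u, σ), y)) (hff : f = s((u, !σ), z))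
    (hyu : y.1 ≠ u) (hzu : z.1 ≠ u) (huF : u ∈ F.verts)
    (hreach : (F.deleteVert u).uReach y.1 z.1) :
    ∃ H : BDGraph V, Good F u H := by
  classical
  obtain ⟨l, hlne, hlhd, hlst, hlnd, hlch⟩ := exists_simple_path hreach
  have hy1l : y.1 ∈ l := List.mem_of_mem_head? (by rw [hlhd]; rfl)
  have hz1l : z.1 ∈ l := List.mem_of_mem_getLast? (by rw [hlst]; rfl)
  -- each element of `l` is distinct from `u`
  have hlnu : ∀ v ∈ l, v ≠ u := by
    intro v hv
    rcases mem_consec hv with hveq | ⟨c, d, hcd, hvcd⟩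
    · have : y.1 = v := by
        rw [hveq] at hlhd
        exact (Option.some_inj.1 hlhd).symm
      rw [← this]; exact hyu
    · obtain ⟨g, hg, a, b, hgeq⟩ := consec_of_chain hlch hcd
      rcases hvcd with h | h
      · rw [h]; exact hg.2 (c, a) (by rw [hgeq]; exact Sym2.mem_mk_left _ _)
      · rw [h]; exact hg.2 (d, b) (by rw [hgeq]; exact Sym2.mem_mk_right _ _)
  -- the candidate cycle graph
  set H : BDGraph V :=
    ⟨{v | v = u ∨ v ∈ l},
     {g | g = e ∨ g = f ∨ (g ∈ (F.deleteVert u).E ∧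
        ∃ c d : V, Consec l c d ∧ ∃ a b : Bool, g = s((c, a), (d, b)))},
     by
      rintro g (rfl | rfl | ⟨hg, c, d, hcd, a, b, rfl⟩) x hx
      · rw [hee] at hx
        rcases Sym2.mem_iff.1 hx with rfl | rfl
        · exact Or.inl rfl
        · exact Or.inr hy1l
      · rw [hff] at hx
        rcases Sym2.mem_iff.1 hx with rfl | rfl
        · exact Or.inl rfl
        · exact Or.inr hz1l
      · rcases Sym2.mem_iff.1 hx with rfl | rfl
        · exact Or.inr (consec_mem hcd).1
        · exact Or.inr (consec_mem hcd).2⟩ with hH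
  have heH : e ∈ H.E := Or.inl rfl
  have hfH : f ∈ H.E := Or.inr (Or.inl rfl)
  have hadjuy : H.uadj u y.1 := ⟨e, heH, σ, y.2, by rw [hee]⟩
  have hadjuz : H.uadj u z.1 := ⟨f, hfH, !σ, z.2, by rw [hff]⟩
  -- reach from u to every vertex of H
  have hchainH : List.Chain' H.uadj l := by
    refine chain'_of_consec ?_
    intro c d hcd
    obtain ⟨g, hg, a, b, hgeq⟩ := consec_of_chain hlch hcd
    exact ⟨g, Or.inr (Or.inr ⟨hg, c, d, hcd, a, b, hgeq⟩), a, b, hgeq⟩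
  have hreachu : ∀ v ∈ H.verts, H.uReach u v := by
    rintro v (rfl | hv)
    · exact .refl
    · exact .trans (.single hadjuy) (chain'_mem_uReach hchainH hy1l hv)
  refine ⟨H, ⟨?_, ?_⟩, ⟨⟨u, Or.inl rfl⟩, ?_⟩, ?_, ?_, ?_⟩
  · -- verts ⊆ F.verts
    rintro v (rfl | hv)
    · exact huF
    · rcases mem_consec hv with hveq | ⟨c, d, hcd, hvcd⟩
      · have : y.1 = v := by
          rw [hveq] at hlhd
          exact (Option.some_inj.1 hlhd).symm
        rw [← this]
        exact F.wf e he y (by rw [hee]; exact Sym2.mem_mk_right _ _)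
      · obtain ⟨g, hg, a, b, hgeq⟩ := consec_of_chain hlch hcd
        rcases hvcd with h | h
        · rw [h]
          exact ((F.deleteVert u).wf g hg (c, a)
            (by rw [hgeq]; exact Sym2.mem_mk_left _ _)).1
        · rw [h]
          exact ((F.deleteVert u).wf g hg (d, b)
            (by rw [hgeq]; exact Sym2.mem_mk_right _ _)).1
  · -- edges ⊆ F.E
    rintro g (rfl | rfl | ⟨hg, -⟩)
    · exact he
    · exact hf
    · exact hg.1
  · -- connectivity
    intro a ha b hb
    exact .trans (uReach_symm (hreachu a ha)) (hreachu b hb)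
  · -- no cutvertex
    rintro x ⟨hxv, s, hs, t, ht, hsx, htx, -, hnr⟩
    rcases eq_or_ne x u with rfl | hxu
    · -- delete u : the path remains
      have hchain' : List.Chain' (H.deleteVert x).uadj l := by
        refine chain'_of_consec ?_
        intro c d hcd
        obtain ⟨g, hg, a, b, hgeq⟩ := consec_of_chain hlch hcd
        refine ⟨g, ⟨Or.inr (Or.inr ⟨hg, c, d, hcd, a, b, hgeq⟩), ?_⟩, a, b, hgeq⟩
        intro w hw
        rcases Sym2.mem_iff.1 (hgeq ▸ hw) with rfl | rfl
        · exact hlnu c (consec_mem hcd).1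
        · exact hlnu d (consec_mem hcd).2
      have hsl : s ∈ l := by
        rcases hs with rfl | h
        · exact absurd rfl hsx
        · exact h
      have htl : t ∈ l := by
        rcases ht with rfl | h
        · exact absurd rfl htx
        · exact h
      exact hnr (chain'_mem_uReach hchain' hsl htl)
    · -- delete x ∈ l
      have hxl : x ∈ l := by
        rcases hxv with h | h
        · exact absurd h hxu
        · exact h
      obtain ⟨l₁, l₂, hlsplit⟩ := List.append_of_mem hxl
      have hnd' := hlsplit ▸ hlnd
      have hxl₁ : x ∉ l₁ := by
        intro hx
        exact (List.disjoint_of_nodup_append hnd') hx (List.mem_cons_self)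
      have hxl₂ : x ∉ l₂ := by
        have := (List.nodup_append.1 hnd').2.1
        exact (List.nodup_cons.1 this).1
      -- every remaining vertex reaches u in H − x
      have hkey : ∀ v ∈ H.verts, v ≠ x → (H.deleteVert x).uReach v u := by
        rintro v hv hvx
        have hul : ∀ c ∈ l₁, (H.deleteVert x).uReach c u := by
          intro c hc
          -- chain on l₁
          have hch₁ : List.Chain' (H.deleteVert x).uadj l₁ := by
            refine chain'_of_consec ?_
            intro c' d' hcd'
            have hcdl : Consec l c' d' := by
              rw [hlsplit]; exact consec_append_left hcd'
            obtain ⟨g, hg, a, b, hgeq⟩ := consec_of_chain hlch hcdl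
            refine ⟨g, ⟨Or.inr (Or.inr ⟨hg, c', d', hcdl, a, b, hgeq⟩), ?_⟩, a, b, hgeq⟩
            intro w hw
            rcases Sym2.mem_iff.1 (hgeq ▸ hw) with rfl | rfl
            · intro hc; exact hxl₁ (hc ▸ (consec_mem hcd').1)
            · intro hc; exact hxl₁ (hc ▸ (consec_mem hcd').2)
          have hl₁ne : l₁ ≠ [] := List.ne_nil_of_mem hc
          have hhd₁ : y.1 ∈ l₁ := by
            have : l.head? = l₁.head? := by
              rw [hlsplit]; exact List.head?_append_of_ne_nil l₁ hl₁ne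
            exact List.mem_of_mem_head? (by rw [← this, hlhd]; rfl)
          have heHx : e ∈ (H.deleteVert x).E := by
            refine ⟨heH, ?_⟩
            intro w hw
            rcases Sym2.mem_iff.1 (hee ▸ hw) with rfl | rfl
            · exact fun h => hxu h.symm
            · intro h; exact hxl₁ (h ▸ hhd₁)
          exact .tail (chain'_mem_uReach hch₁ hc hhd₁)
            (uadj_symm ⟨e, heHx, σ, y.2, by rw [hee]⟩)
        have hul₂ : ∀ c ∈ l₂, (H.deleteVert x).uReach c u := by
          intro c hc
          have hch₂ : List.Chain' (H.deleteVert x).uadj l₂ := by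
            refine chain'_of_consec ?_
            intro c' d' hcd'
            have hcdl : Consec l c' d' := by
              obtain ⟨m₁, m₂, hm⟩ := hcd'
              exact ⟨l₁ ++ x :: m₁, m₂, by rw [hlsplit, hm]; simp⟩
            obtain ⟨g, hg, a, b, hgeq⟩ := consec_of_chain hlch hcdl
            refine ⟨g, ⟨Or.inr (Or.inr ⟨hg, c', d', hcdl, a, b, hgeq⟩), ?_⟩, a, b, hgeq⟩
            intro w hw
            rcases Sym2.mem_iff.1 (hgeq ▸ hw) with rfl | rfl
            · intro hc'; exact hxl₂ (hc' ▸ (consec_mem hcd').1)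
            · intro hc'; exact hxl₂ (hc' ▸ (consec_mem hcd').2)
          have hl₂ne : l₂ ≠ [] := List.ne_nil_of_mem hc
          have hlst₂ : z.1 ∈ l₂ := by
            have : l.getLast? = l₂.getLast? := by
              rw [hlsplit, List.getLast?_append_cons]
              exact List.getLast?_append_of_ne_nil [x] hl₂ne
            exact List.mem_of_mem_getLast? (by rw [← this, hlst]; rfl)
          have hfHx : f ∈ (H.deleteVert x).E := by
            refine ⟨hfH, ?_⟩
            intro w hw
            rcases Sym2.mem_iff.1 (hff ▸ hw) with rfl | rfl
            · exact fun h => hxu h.symm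
            · intro h; exact hxl₂ (h ▸ hlst₂)
          exact .tail (chain'_mem_uReach hch₂ hc hlst₂)
            (uadj_symm ⟨f, hfHx, !σ, z.2, by rw [hff]⟩)
        rcases hv with rfl | hvl
        · exact .refl
        · have : v ∈ l₁ ++ x :: l₂ := hlsplit ▸ hvl
          rcases List.mem_append.1 this with h1 | h2
          · exact hul v h1
          · rcases List.mem_cons.1 h2 with rfl | h2'
            · exact absurd rfl hvx
            · exact hul₂ v h2'
      exact hnr (.trans (hkey s hs hsx) (uReach_symm (hkey t ht htx)))
  · -- HasSide true / false
    cases σ with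
    | true => exact ⟨e, heH, by rw [hee]; exact Sym2.mem_mk_left _ _⟩
    | false => exact ⟨f, hfH, by rw [hff]; exact Sym2.mem_mk_left _ _⟩
  · cases σ with
    | true => exact ⟨f, hfH, by rw [hff]; exact Sym2.mem_mk_left _ _⟩
    | false => exact ⟨e, heH, by rw [hee]; exact Sym2.mem_mk_left _ _⟩

end Cycle

section SplitAll
open BDGraph

lemma scKey_sc {G : BDGraph V} {x : Side V} (h : G.SignConsistent x.1) :
    scKey G x = x := by simp [scKey, h]

lemma scKey_nsc {G : BDGraph V} {x : Side V} (h : ¬ G.SignConsistent x.1) :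
    scKey G x = (x.1, true) := by simp [scKey, h]

lemma splitAll_uadj_of_edge {G : BDGraph V} {g : Sym2 (Side V)} (hg : g ∈ G.E)
    {y z : Side V} (hyz : g = s(y, z)) :
    G.splitAll.uadj (scKey G y) (scKey G z) :=
  ⟨Sym2.map (fun t : Side V => (scKey G t, t.2)) g, ⟨g, hg, rfl⟩, y.2, z.2,
    by rw [hyz, Sym2.map_pair_eq]⟩

lemma splitAll_uadj_elim {G : BDGraph V} {b c : Side V} (h : G.splitAll.uadj b c) :
    ∃ g ∈ G.E, ∃ y z : Side V, g = s(y, z) ∧ scKey G y = b ∧ scKey G z = c := by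
  obtain ⟨ee, hee, σ, τ, heq⟩ := h
  obtain ⟨g, hg, rfl⟩ := hee
  obtain ⟨⟨y, z⟩, hyz⟩ := g.exists_rep
  rw [← hyz, Sym2.map_pair_eq] at heq
  rw [Sym2.eq_iff] at heq
  rcases heq with ⟨h1, h2⟩ | ⟨h1, h2⟩
  · exact ⟨g, hg, y, z, hyz.symm, congrArg Prod.fst h1, congrArg Prod.fst h2⟩
  · exact ⟨g, hg, z, y, by rw [← hyz]; exact Sym2.eq_swap.symm,
      congrArg Prod.fst h2, congrArg Prod.fst h1⟩

/-- If `u` is sign-consistent, its two copies lie in different components of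
`G.splitAll`. -/
lemma split_not_reach {G : BDGraph V} {u : V} (hsc : G.SignConsistent u) :
    ¬ G.splitAll.uReach (u, true) (u, false) := by
  classical
  obtain ⟨huG, a0, ha0G, b0, hb0G, ha0u, hb0u, -, -⟩ := hsc.1
  set P : Side V → Prop := fun q =>
    q = (u, true) ∨ (q.1 ≠ u ∧ ∃ c : Side V, s((u, true), c) ∈ G.E ∧
      (c.1 = u ∨ (G.deleteVert u).uReach c.1 q.1)) with hP
  have hind : ∀ q : Side V, G.splitAll.uReach (u, true) q → P q := by
    intro q hq
    induction hq with
    | refl => exact Or.inl rfl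
    | @tail b c hab hbc ih =>
      obtain ⟨g, hg, y, z, hgyz, hyb, hzc⟩ := splitAll_uadj_elim hbc
      obtain ⟨y1, y2⟩ := y
      obtain ⟨z1, z2⟩ := z
      have hzc1 : c.1 = z1 := (congrArg Prod.fst hzc).symm.trans (scKey_fst G (z1, z2))
      rcases ih with rfl | ⟨hbu, cw, hcwE, hcw⟩
      · -- b = (u, true)
        have hy1 : y1 = u := (scKey_fst G (y1, y2)).symm.trans (congrArg Prod.fst hyb)
        have hyy : (y1, y2) = ((u : V), true) :=
          (scKey_sc (x := (y1, y2)) (by rw [show (y1,y2).1 = u from hy1]; exact hsc)).symm.trans hyb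
        by_cases hz1 : z1 = u
        · have hcz : c = (z1, z2) :=
            hzc.symm.trans (scKey_sc (x := (z1, z2)) (by rw [show (z1,z2).1 = z1 from rfl, hz1]; exact hsc))
          cases z2 with
          | true => exact Or.inl (by rw [hcz, hz1])
          | false =>
            exfalso
            have hcon : true = false := by
              refine hsc.2 a0 ⟨ha0G, ha0u⟩ g hg g hg ?_ ?_ true false ?_ ?_
              · intro w hw
                rcases Sym2.mem_iff.1 (hgyz ▸ hw) with rfl | rfl
                · exact Or.inl hy1
                · exact Or.inl hz1
              · intro w hw
                rcases Sym2.mem_iff.1 (hgyz ▸ hw) with rfl | rfl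
                · exact Or.inl hy1
                · exact Or.inl hz1
              · rw [hgyz, hyy]; exact Sym2.mem_mk_left _ _
              · rw [hgyz, hz1]; exact Sym2.mem_mk_right _ _
            exact Bool.noConfusion hcon
        · refine Or.inr ⟨fun h => hz1 (hzc1.symm.trans h), (z1, z2),
            by rw [← hyy, ← hgyz]; exact hg, Or.inr ?_⟩
          rw [hzc1]
          exact Relation.ReflTransGen.refl
      · -- b.1 ≠ u
        have hy1 : y1 = b.1 := (scKey_fst G (y1, y2)).symm.trans (congrArg Prod.fst hyb)
        have hy1u : y1 ≠ u := by rw [hy1]; exact hbu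
        by_cases hz1 : z1 = u
        · have hcz : c = (z1, z2) :=
            hzc.symm.trans (scKey_sc (x := (z1, z2)) (by rw [show (z1,z2).1 = z1 from rfl, hz1]; exact hsc))
          cases z2 with
          | true => exact Or.inl (by rw [hcz, hz1])
          | false =>
            exfalso
            have hb1G : b.1 ∈ G.verts := by
              rw [← hy1]
              exact G.wf g hg (y1, y2) (by rw [hgyz]; exact Sym2.mem_mk_left _ _)
            have hcon : true = false := by
              refine hsc.2 b.1 ⟨hb1G, hbu⟩ s(((u : V), true), cw) hcwE g hg ?_ ?_
                true false (Sym2.mem_mk_left _ _) ?_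
              · intro w hw
                rcases Sym2.mem_iff.1 hw with rfl | rfl
                · exact Or.inl rfl
                · rcases hcw with h | h
                  · exact Or.inl h
                  · exact Or.inr (uReach_symm h)
              · intro w hw
                rcases Sym2.mem_iff.1 (hgyz ▸ hw) with rfl | rfl
                · exact Or.inr (by rw [show (y1,y2).1 = y1 from rfl, hy1]; exact Relation.ReflTransGen.refl)
                · exact Or.inl hz1
              · rw [hgyz, hz1]; exact Sym2.mem_mk_right _ _
            exact Bool.noConfusion hcon
        · -- z1 ≠ u : extend the witness path
          refine Or.inr ⟨fun h => hz1 (hzc1.symm.trans h), cw, hcwE, ?_⟩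
          rcases hcw with h | h
          · exact Or.inl h
          · right
            have hgdel : g ∈ (G.deleteVert u).E := by
              refine ⟨hg, ?_⟩
              intro w hw
              rcases Sym2.mem_iff.1 (hgyz ▸ hw) with rfl | rfl
              · exact hy1u
              · exact hz1
            have hadj : (G.deleteVert u).uadj b.1 z1 :=
              ⟨g, hgdel, y2, z2, by rw [hgyz, ← hy1]⟩
            rw [hzc1]
            exact h.trans (Relation.ReflTransGen.single hadj)
  intro hreach
  rcases hind _ hreach with h | ⟨h, -⟩
  · exact Bool.noConfusion (congrArg Prod.snd h)
  · exact h rfl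

end SplitAll

section Transfer
open BDGraph

lemma consec_ne {l : List V} (hnd : l.Nodup) {c d : V} (h : Consec l c d) : c ≠ d := by
  obtain ⟨l₁, l₂, rfl⟩ := h
  have h2 : (c :: d :: l₂).Nodup := (List.nodup_append.1 hnd).2.1
  intro hcd
  exact (List.nodup_cons.1 h2).1 (hcd ▸ List.mem_cons_self)

lemma transfer {G F : BDGraph V} {p : Side V}
    (hFE : F.E = {e | e ∈ G.E ∧ ∀ y : Side V, y ∈ e →
      G.splitAll.uReach p (scKey G y)})
    {u : V} (huG : u ∈ G.verts)
    {w w' : V} {γ γ' sw sw' : Bool}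
    (hew : s((u, γ), (w, sw)) ∈ F.E) (hew' : s((u, γ'), (w', sw')) ∈ F.E)
    (hwu : w ≠ u) (hw'u : w' ≠ u)
    (hGr : (G.deleteVert u).uReach w w') :
    (F.deleteVert u).uReach w w' := by
  classical
  have hewG : s((u, γ), (w, sw)) ∈ G.E := by rw [hFE] at hew; exact hew.1
  have hew'G : s((u, γ'), (w', sw')) ∈ G.E := by rw [hFE] at hew'; exact hew'.1
  obtain ⟨l, hlne, hlhd, hlst, hlnd, hlch⟩ := exists_simple_path hGr
  have hwl : w ∈ l := List.mem_of_mem_head? (by rw [hlhd]; rfl)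
  have hw'l : w' ∈ l := List.mem_of_mem_getLast? (by rw [hlst]; rfl)
  have hlnu : ∀ v ∈ l, v ≠ u := by
    intro v hv
    rcases mem_consec hv with hveq | ⟨c, d, hcd, hvcd⟩
    · have : w = v := by
        rw [hveq] at hlhd
        exact (Option.some_inj.1 hlhd).symm
      rw [← this]; exact hwu
    · obtain ⟨g, hg, a, b, hgeq⟩ := consec_of_chain hlch hcd
      rcases hvcd with h | h
      · rw [h]; exact hg.2 (c, a) (by rw [hgeq]; exact Sym2.mem_mk_left _ _)
      · rw [h]; exact hg.2 (d, b) (by rw [hgeq]; exact Sym2.mem_mk_right _ _)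
  -- every vertex of the path except `c` is reachable from `u` after deleting `c`
  have hRA : ∀ c ∈ l, ∀ v ∈ l, v ≠ c → (G.deleteVert c).uReach u v := by
    intro c hc v hv hvc
    obtain ⟨l₁, l₂, hlsplit⟩ := List.append_of_mem hc
    have hnd' := hlsplit ▸ hlnd
    have hcl₁ : c ∉ l₁ := fun hx =>
      (List.disjoint_of_nodup_append hnd') hx (List.mem_cons_self)
    have hcl₂ : c ∉ l₂ := (List.nodup_cons.1 (List.nodup_append.1 hnd').2.1).1
    have hcu : c ≠ u := hlnu c hc
    have case1 : ∀ v' ∈ l₁, (G.deleteVert c).uReach u v' := by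
      intro v' hv'
      have hl₁ne : l₁ ≠ [] := List.ne_nil_of_mem hv'
      have hch₁ : List.Chain' (G.deleteVert c).uadj l₁ := by
        refine chain'_of_consec ?_
        intro c' d' hcd'
        have hcdl : Consec l c' d' := by
          rw [hlsplit]; exact consec_append_left hcd'
        obtain ⟨g, hg, a, b, hgeq⟩ := consec_of_chain hlch hcdl
        refine ⟨g, ⟨hg.1, ?_⟩, a, b, hgeq⟩
        intro x hx
        rcases Sym2.mem_iff.1 (hgeq ▸ hx) with rfl | rfl
        · intro h; exact hcl₁ (h ▸ (consec_mem hcd').1)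
        · intro h; exact hcl₁ (h ▸ (consec_mem hcd').2)
      have hhd₁ : w ∈ l₁ := by
        have : l.head? = l₁.head? := by
          rw [hlsplit]; exact List.head?_append_of_ne_nil l₁ hl₁ne
        exact List.mem_of_mem_head? (by rw [← this, hlhd]; rfl)
      have hadj : (G.deleteVert c).uadj u w := by
        refine ⟨s((u, γ), (w, sw)), ⟨hewG, ?_⟩, γ, sw, rfl⟩
        intro x hx
        rcases Sym2.mem_iff.1 hx with rfl | rfl
        · exact fun h => hcu h.symm
        · exact fun h => hcl₁ (h ▸ hhd₁)
      exact .head hadj (chain'_mem_uReach hch₁ hhd₁ hv')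
    have case2 : ∀ v' ∈ l₂, (G.deleteVert c).uReach u v' := by
      intro v' hv'
      have hl₂ne : l₂ ≠ [] := List.ne_nil_of_mem hv'
      have hch₂ : List.Chain' (G.deleteVert c).uadj l₂ := by
        refine chain'_of_consec ?_
        intro c' d' hcd'
        have hcdl : Consec l c' d' := by
          obtain ⟨m₁, m₂, hm⟩ := hcd'
          exact ⟨l₁ ++ c :: m₁, m₂, by rw [hlsplit, hm]; simp⟩
        obtain ⟨g, hg, a, b, hgeq⟩ := consec_of_chain hlch hcdl
        refine ⟨g, ⟨hg.1, ?_⟩, a, b, hgeq⟩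
        intro x hx
        rcases Sym2.mem_iff.1 (hgeq ▸ hx) with rfl | rfl
        · intro h; exact hcl₂ (h ▸ (consec_mem hcd').1)
        · intro h; exact hcl₂ (h ▸ (consec_mem hcd').2)
      have hlst₂ : w' ∈ l₂ := by
        have : l.getLast? = l₂.getLast? := by
          rw [hlsplit, List.getLast?_append_cons]
          exact List.getLast?_append_of_ne_nil [c] hl₂ne
        exact List.mem_of_mem_getLast? (by rw [← this, hlst]; rfl)
      have hadj : (G.deleteVert c).uadj u w' := by
        refine ⟨s((u, γ'), (w', sw')), ⟨hew'G, ?_⟩, γ', sw', rfl⟩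
        intro x hx
        rcases Sym2.mem_iff.1 hx with rfl | rfl
        · exact fun h => hcu h.symm
        · exact fun h => hcl₂ (h ▸ hlst₂)
      exact .head hadj (chain'_mem_uReach hch₂ hlst₂ hv')
    have : v ∈ l₁ ++ c :: l₂ := hlsplit ▸ hv
    rcases List.mem_append.1 this with h1 | h2
    · exact case1 v h1
    · rcases List.mem_cons.1 h2 with h | h
      · exact absurd h hvc
      · exact case2 v h
  -- sign agreement at sign-consistent path vertices
  have hSA : ∀ c ∈ l, G.SignConsistent c → ∀ g g' : Sym2 (Side V), g ∈ G.E → g' ∈ G.E →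
      ∀ δ δ' : Bool, (c, δ) ∈ g → (c, δ') ∈ g' →
      (∀ x : Side V, x ∈ g → x.1 = c ∨ (G.deleteVert c).uReach u x.1) →
      (∀ x : Side V, x ∈ g' → x.1 = c ∨ (G.deleteVert c).uReach u x.1) → δ = δ' := by
    intro c hc hsc g g' hg hg' δ δ' hδ hδ' hy hy'
    exact hsc.2 u ⟨huG, fun h => (hlnu c hc) ((Set.mem_singleton_iff.1 h).symm)⟩
      g hg g' hg' hy hy' δ δ' hδ hδ'
  -- the propagated property
  set P' : V → Prop := fun v => v ∈ l ∧ ∀ g ∈ G.E, ∀ δ : Bool, (v, δ) ∈ g →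
      (∀ x : Side V, x ∈ g → x.1 = v ∨ (G.deleteVert v).uReach u x.1) →
      G.splitAll.uReach p (scKey G (v, δ)) with hP'
  have hreach_w : G.splitAll.uReach p (scKey G (w, sw)) := by
    rw [hFE] at hew
    exact hew.2 (w, sw) (Sym2.mem_mk_right _ _)
  have hanch_ew : ∀ x : Side V, x ∈ s((u, γ), (w, sw)) →
      x.1 = w ∨ (G.deleteVert w).uReach u x.1 := by
    intro x hx
    rcases Sym2.mem_iff.1 hx with rfl | rfl
    · exact Or.inr Relation.ReflTransGen.refl
    · exact Or.inl rfl
  have claim1 : P' w := by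
    refine ⟨hwl, ?_⟩
    intro g hg δ hδ hanch
    by_cases hscw : G.SignConsistent w
    · have : δ = sw := hSA w hwl hscw g s((u, γ), (w, sw)) hg hewG δ sw hδ
        (Sym2.mem_mk_right _ _) hanch hanch_ew
      rw [this]
      exact hreach_w
    · rw [scKey_nsc (x := (w, δ)) hscw]
      rw [scKey_nsc (x := (w, sw)) hscw] at hreach_w
      exact hreach_w
  -- the propagation step
  have hstep : ∀ c d : V, Consec l c d → P' c →
      P' d ∧ (F.deleteVert u).uadj c d := by
    intro c d hcd hPc
    obtain ⟨g0, hg0, a, b, hg0eq⟩ := consec_of_chain hlch hcd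
    have hcl : c ∈ l := (consec_mem hcd).1
    have hdl : d ∈ l := (consec_mem hcd).2
    have hcdne : c ≠ d := consec_ne hlnd hcd
    have hmem_ca : ((c : V), a) ∈ g0 := by rw [hg0eq]; exact Sym2.mem_mk_left _ _
    have hmem_db : ((d : V), b) ∈ g0 := by rw [hg0eq]; exact Sym2.mem_mk_right _ _
    have hanch_c : ∀ x : Side V, x ∈ g0 → x.1 = c ∨ (G.deleteVert c).uReach u x.1 := by
      intro x hx
      rcases Sym2.mem_iff.1 (hg0eq ▸ hx) with rfl | rfl
      · exact Or.inl rfl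
      · exact Or.inr (hRA c hcl d hdl (fun h => hcdne h.symm))
    have hanch_d : ∀ x : Side V, x ∈ g0 → x.1 = d ∨ (G.deleteVert d).uReach u x.1 := by
      intro x hx
      rcases Sym2.mem_iff.1 (hg0eq ▸ hx) with rfl | rfl
      · exact Or.inr (hRA d hdl c hcl hcdne)
      · exact Or.inl rfl
    have hreach_ca : G.splitAll.uReach p (scKey G (c, a)) :=
      hPc.2 g0 hg0.1 a hmem_ca hanch_c
    have hreach_db : G.splitAll.uReach p (scKey G (d, b)) :=
      hreach_ca.tail (splitAll_uadj_of_edge hg0.1 hg0eq)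
    have hg0F : g0 ∈ F.E := by
      rw [hFE]
      refine ⟨hg0.1, ?_⟩
      intro x hx
      rcases Sym2.mem_iff.1 (hg0eq ▸ hx) with rfl | rfl
      · exact hreach_ca
      · exact hreach_db
    constructor
    · refine ⟨hdl, ?_⟩
      intro g' hg' δ' hδ' hanch'
      by_cases hscd : G.SignConsistent d
      · have : δ' = b := hSA d hdl hscd g' g0 hg' hg0.1 δ' b hδ' hmem_db hanch' hanch_d
        rw [this]
        exact hreach_db
      · rw [scKey_nsc (x := (d, δ')) hscd]
        rw [scKey_nsc (x := (d, b)) hscd] at hreach_db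
        exact hreach_db
    · exact ⟨g0, ⟨hg0F, hg0.2⟩, a, b, hg0eq⟩
  -- chain the path edges into F − u
  have main : ∀ m m₀ : List V, l = m₀ ++ m → ∀ c, m.head? = some c → P' c →
      List.Chain' (F.deleteVert u).uadj m := by
    intro m
    induction m with
    | nil => intro _ _ _ _ _; exact List.isChain_nil
    | cons cH rest ih =>
      intro m₀ hldec c hhd hPc
      have hceq : cH = c := Option.some_inj.1 hhd
      subst hceq
      cases rest with
      | nil => exact List.isChain_singleton _
      | cons d rest' =>
        have hcd : Consec l cH d := ⟨m₀, rest', by rw [hldec]⟩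
        obtain ⟨hPd, hadj⟩ := hstep cH d hcd hPc
        exact List.isChain_cons_cons.2 ⟨hadj,
          ih (m₀ ++ [cH]) (by rw [hldec]; simp) d rfl hPd⟩
  have hchF : List.Chain' (F.deleteVert u).uadj l := main l [] rfl w hlhd claim1
  exact chain'_mem_uReach hchF hwl hw'l

end Transfer

section Main
open BDGraph

lemma small_good (F : BDGraph V) (u v : V) (E₀ : Set (Sym2 (Side V)))
    (hsubE : E₀ ⊆ F.E) (huF : u ∈ F.verts) (hvF : v ∈ F.verts)
    (hsides : ∀ g ∈ E₀, ∀ x : Side V, x ∈ g → x.1 = u ∨ x.1 = v)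
    (hconn : ∃ g ∈ E₀, ∃ a b : Bool, g = s((u, a), (v, b)))
    (ht : ∃ g ∈ E₀, ((u : V), true) ∈ g) (hf : ∃ g ∈ E₀, ((u : V), false) ∈ g) :
    ∃ H : BDGraph V, Good F u H := by
  refine ⟨⟨{x | x = u ∨ x = v}, E₀, fun g hg x hx => hsides g hg x hx⟩,
    ⟨?_, hsubE⟩, ⟨⟨u, Or.inl rfl⟩, ?_⟩, ?_, ht, hf⟩
  · rintro x (rfl | rfl)
    · exact huF
    · exact hvF
  · obtain ⟨g, hg, a, b, hgeq⟩ := hconn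
    have hadj : BDGraph.uadj ⟨{x | x = u ∨ x = v}, E₀, fun g hg x hx => hsides g hg x hx⟩ u v :=
      ⟨g, hg, a, b, hgeq⟩
    rintro x (rfl | rfl) y (rfl | rfl)
    · exact .refl
    · exact .single hadj
    · exact .single (uadj_symm hadj)
    · exact .refl
  · rintro x ⟨hxv, a, ha, b, hb, hax, hbx, -, hnr⟩
    refine hnr ?_
    have hab : a = b := by
      rcases hxv with rfl | rfl
      · rcases ha with rfl | rfl
        · exact absurd rfl hax
        · rcases hb with rfl | rfl
          · exact absurd rfl hbx
          · rfl
      · rcases ha with rfl | rfl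
        · rcases hb with rfl | rfl
          · rfl
          · exact absurd rfl hbx
        · exact absurd rfl hax
    rw [hab]
    exact .refl

end Main

/-- If `F` is a sign-cut graph of `G` and `u ∈ V(F)` is not a tip in
`F`, then some block of `F` has vertex-sides of opposite signs at `u`. -/
theorem statement_8 (G F : BDGraph V) (hF : IsSignCutGraph G F)
    (u : V) (hu : u ∈ F.verts) (hnt : ¬ F.IsTip u) :
    ∃ H : BDGraph V, IsBlock F H ∧ H.HasSide u true ∧ H.HasSide u false := by
  classical
  obtain ⟨p, hpv, hverts, hE⟩ := hF
  unfold BDGraph.IsTip at hnt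
  push_neg at hnt
  obtain ⟨e0, he0, f0, hf0, σ0, hue0, huf0, -⟩ := hnt
  have hFsubE : F.E ⊆ G.E := by
    intro g hg
    rw [hE] at hg
    exact hg.1
  by_cases hsc : G.SignConsistent u
  · exfalso
    have h1 : G.splitAll.uReach p (scKey G (u, σ0)) := by
      rw [hE] at he0
      exact he0.2 _ hue0
    have h2 : G.splitAll.uReach p (scKey G (u, !σ0)) := by
      rw [hE] at hf0
      exact hf0.2 _ huf0
    rw [scKey_sc (x := ((u : V), σ0)) hsc] at h1
    rw [scKey_sc (x := ((u : V), !σ0)) hsc] at h2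
    cases σ0 with
    | true => exact split_not_reach hsc ((uReach_symm h1).trans h2)
    | false => exact split_not_reach hsc ((uReach_symm h2).trans h1)
  · -- u is not sign-consistent in G
    have hscKu : ∀ δ : Bool, scKey G ((u : V), δ) = (u, true) := fun δ =>
      scKey_nsc (x := ((u : V), δ)) hsc
    have hpu : G.splitAll.uReach p ((u : V), true) := by
      rw [hE] at he0
      have h := he0.2 _ hue0
      rw [hscKu σ0] at h
      exact h
    have hincident : ∀ g ∈ G.E, ∀ δ : Bool, ((u : V), δ) ∈ g → g ∈ F.E := by
      intro g hg δ hδ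
      obtain ⟨zz, hzz⟩ := mem_other hδ
      rw [hE]
      refine ⟨hg, ?_⟩
      intro x hx
      rcases Sym2.mem_iff.1 (hzz ▸ hx) with rfl | rfl
      · rw [hscKu]; exact hpu
      · refine hpu.tail ?_
        have h := splitAll_uadj_of_edge hg hzz
        rw [hscKu δ] at h
        exact h
    have huG : u ∈ G.verts := G.wf _ (hFsubE he0) _ hue0
    by_cases hgood : ∃ H, Good F u H
    · exact zorn_block F u hgood
    exfalso
    have fact1 : ∀ g ∈ F.E, ((u : V), true) ∈ g → ((u : V), false) ∈ g → False := by
      intro g hg h1 h2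
      obtain ⟨zz, hzz⟩ := mem_other h1
      have hzzf : zz = ((u : V), false) := by
        rcases Sym2.mem_iff.1 (hzz ▸ h2) with h | h
        · exact absurd (congrArg Prod.snd h.symm) (by simp)
        · exact h.symm
      refine hgood (small_good F u u {g} (by simpa using hg) hu hu ?_ ?_ ?_ ?_)
      · intro g' hg' x hx
        rw [Set.mem_singleton_iff] at hg'
        subst hg'
        rcases Sym2.mem_iff.1 (hzz ▸ hx) with rfl | rfl
        · exact Or.inl rfl
        · rw [hzzf]; exact Or.inl rfl
      · exact ⟨g, rfl, true, false, by rw [hzz, hzzf]⟩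
      · exact ⟨g, rfl, h1⟩
      · exact ⟨g, rfl, h2⟩
    have fact2 : ∀ g ∈ F.E, ∀ δ : Bool, ((u : V), δ) ∈ g →
        ∃ t : Side V, g = s((u, δ), t) ∧ t.1 ≠ u := by
      intro g hg δ hδ
      obtain ⟨t, htg⟩ := mem_other hδ
      obtain ⟨t1, t2⟩ := t
      refine ⟨(t1, t2), htg, ?_⟩
      intro ht1
      rw [show ((t1 : V), t2).1 = t1 from rfl] at ht1
      rw [ht1] at htg
      by_cases ht2 : t2 = δ
      · -- g is a single-signed loop at u; combine with an edge of the other sign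
        rw [ht2] at htg
        obtain ⟨g2, hg2, hug2⟩ : ∃ g2 ∈ F.E, ((u : V), !δ) ∈ g2 := by
          have : δ = σ0 ∨ δ = !σ0 := by cases δ <;> cases σ0 <;> first | exact Or.inl rfl | exact Or.inr rfl
          rcases this with rfl | rfl
          · exact ⟨f0, hf0, huf0⟩
          · exact ⟨e0, he0, by rw [Bool.not_not]; exact hue0⟩
        obtain ⟨s', hsg2⟩ := mem_other hug2
        obtain ⟨s1, s2⟩ := s'
        by_cases hs1 : s1 = u
        · rw [hs1] at hsg2
          by_cases hs2 : s2 = !δ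
          · rw [hs2] at hsg2
            refine hgood (small_good F u u {g, g2} ?_ hu hu ?_ ?_ ?_ ?_)
            · rintro g' (rfl | rfl)
              · exact hg
              · exact hg2
            · rintro g' (rfl | rfl) x hx
              · rcases Sym2.mem_iff.1 (htg ▸ hx) with rfl | rfl
                · exact Or.inl rfl
                · exact Or.inl rfl
              · rcases Sym2.mem_iff.1 (hsg2 ▸ hx) with rfl | rfl
                · exact Or.inl rfl
                · exact Or.inl rfl
            · exact ⟨g, Or.inl rfl, δ, δ, htg⟩
            · cases δ with
              | true => exact ⟨g, Or.inl rfl, by rw [htg]; exact Sym2.mem_mk_left _ _⟩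
              | false => exact ⟨g2, Or.inr rfl, by rw [hsg2]; exact Sym2.mem_mk_left _ _⟩
            · cases δ with
              | true => exact ⟨g2, Or.inr rfl, by rw [hsg2]; exact Sym2.mem_mk_left _ _⟩
              | false => exact ⟨g, Or.inl rfl, by rw [htg]; exact Sym2.mem_mk_left _ _⟩
          · have hs2' : s2 = δ := by cases δ <;> cases s2 <;> first | rfl | exact absurd rfl hs2
            rw [hs2'] at hsg2
            cases δ with
            | true =>
              exact fact1 g2 hg2 (by rw [hsg2]; exact Sym2.mem_mk_right _ _)
                (by rw [hsg2]; exact Sym2.mem_mk_left _ _)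
            | false =>
              exact fact1 g2 hg2 (by rw [hsg2]; exact Sym2.mem_mk_left _ _)
                (by rw [hsg2]; exact Sym2.mem_mk_right _ _)
        · refine hgood (small_good F u s1 {g, g2} ?_ hu
            (F.wf g2 hg2 (s1, s2) (by rw [hsg2]; exact Sym2.mem_mk_right _ _)) ?_ ?_ ?_ ?_)
          · rintro g' (rfl | rfl)
            · exact hg
            · exact hg2
          · rintro g' (rfl | rfl) x hx
            · rcases Sym2.mem_iff.1 (htg ▸ hx) with rfl | rfl
              · exact Or.inl rfl
              · exact Or.inl rfl
            · rcases Sym2.mem_iff.1 (hsg2 ▸ hx) with rfl | rfl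
              · exact Or.inl rfl
              · exact Or.inr rfl
          · exact ⟨g2, Or.inr rfl, !δ, s2, hsg2⟩
          · cases δ with
            | true => exact ⟨g, Or.inl rfl, by rw [htg]; exact Sym2.mem_mk_left _ _⟩
            | false => exact ⟨g2, Or.inr rfl, by rw [hsg2]; exact Sym2.mem_mk_left _ _⟩
          · cases δ with
            | true => exact ⟨g2, Or.inr rfl, by rw [hsg2]; exact Sym2.mem_mk_left _ _⟩
            | false => exact ⟨g, Or.inl rfl, by rw [htg]; exact Sym2.mem_mk_left _ _⟩
      · -- g contains both signs at u
        have ht2' : t2 = !δ := by cases δ <;> cases t2 <;> first | rfl | exact absurd rfl ht2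
        rw [ht2'] at htg
        cases δ with
        | true =>
          exact fact1 g hg (by rw [htg]; exact Sym2.mem_mk_left _ _)
            (by rw [htg]; exact Sym2.mem_mk_right _ _)
        | false =>
          exact fact1 g hg (by rw [htg]; exact Sym2.mem_mk_right _ _)
            (by rw [htg]; exact Sym2.mem_mk_left _ _)
    have fact3 : ∀ g ∈ F.E, ∀ g' ∈ F.E, ∀ δ : Bool, ∀ t t' : Side V,
        g = s((u, δ), t) → g' = s((u, !δ), t') → t.1 ≠ u → t'.1 ≠ u →
        ¬ (F.deleteVert u).uReach t.1 t'.1 := by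
      intro g hg g' hg' δ t t' hgs hg's htne ht'ne hr
      exact hgood (cycle_good F u hg hg' hgs hg's htne ht'ne hu hr)
    rw [BDGraph.SignConsistent] at hsc
    rcases not_and_or.1 hsc with hnc | hnall
    · -- u is not even a cutvertex of G
      obtain ⟨t0, he0s, ht0u⟩ := fact2 e0 he0 σ0 hue0
      obtain ⟨t1, hf0s, ht1u⟩ := fact2 f0 hf0 (!σ0) huf0
      have he0G := hFsubE he0
      have hf0G := hFsubE hf0
      have hadj0 : G.uadj u t0.1 := ⟨e0, he0G, σ0, t0.2, by rw [he0s]⟩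
      have hadj1 : G.uadj u t1.1 := ⟨f0, hf0G, !σ0, t1.2, by rw [hf0s]⟩
      have hreachG : G.uReach t0.1 t1.1 :=
        Relation.ReflTransGen.head (uadj_symm hadj0) (Relation.ReflTransGen.single hadj1)
      have ht0v : t0.1 ∈ G.verts :=
        G.wf e0 he0G t0 (by rw [he0s]; exact Sym2.mem_mk_right _ _)
      have ht1v : t1.1 ∈ G.verts :=
        G.wf f0 hf0G t1 (by rw [hf0s]; exact Sym2.mem_mk_right _ _)
      rw [BDGraph.IsCutvertex] at hnc
      push_neg at hnc
      have hdel : (G.deleteVert u).uReach t0.1 t1.1 :=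
        hnc huG t0.1 ht0v t1.1 ht1v ht0u ht1u hreachG
      have hFdel : (F.deleteVert u).uReach t0.1 t1.1 :=
        transfer hE huG (γ := σ0) (γ' := !σ0) (he0s ▸ he0) (hf0s ▸ hf0) ht0u ht1u hdel
      exact fact3 e0 he0 f0 hf0 σ0 t0 t1 he0s hf0s ht0u ht1u hFdel
    · push_neg at hnall
      obtain ⟨a, ha, e1, he1G, f1, hf1G, hce, hcf, σ, τ, huσ, huτ, hστ⟩ := hnall
      have he1F : e1 ∈ F.E := hincident e1 he1G σ huσ
      have hf1F : f1 ∈ F.E := hincident f1 hf1G τ huτ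
      obtain ⟨t0, he1s, ht0u⟩ := fact2 e1 he1F σ huσ
      obtain ⟨t1, hf1s, ht1u⟩ := fact2 f1 hf1F τ huτ
      have hτ : τ = !σ := by cases σ <;> cases τ <;> first | rfl | exact absurd rfl hστ
      subst hτ
      have h1 : (G.deleteVert u).uReach a t0.1 := by
        rcases hce t0 (by rw [he1s]; exact Sym2.mem_mk_right _ _) with h | h
        · exact absurd h ht0u
        · exact h
      have h2 : (G.deleteVert u).uReach a t1.1 := by
        rcases hcf t1 (by rw [hf1s]; exact Sym2.mem_mk_right _ _) with h | h
        · exact absurd h ht1u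
        · exact h
      have hdel : (G.deleteVert u).uReach t0.1 t1.1 := (uReach_symm h1).trans h2
      have hFdel : (F.deleteVert u).uReach t0.1 t1.1 :=
        transfer hE huG (γ := σ) (γ' := !σ) (he1s ▸ he1F) (hf1s ▸ hf1F) ht0u ht1u hdel
      exact fact3 e1 he1F f1 hf1F σ t0 t1 he1s hf1s ht0u ht1u hFdel

end Paper
end

section
/- Let G be a connected bidirected graph and let {uα, vβ} be a snarl of G with snarl component X. Then X = G if and only if u and v are tips in G with signs α and β, respectively. -/
/-!
Bidirected graphs.  A vertex-side is a vertex with a sign (`true` = `+`, `false` = `−`);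
a bidirected edge is an unordered pair of vertex-sides (an element of `Sym2 (V × Bool)`).
-/

namespace Paper

variable {V : Type}

lemma uadj_mem_verts {G : BDGraph V} {a b : V} (h : G.uadj a b) :
    a ∈ G.verts ∧ b ∈ G.verts := by
  obtain ⟨e, he, σ, τ, rfl⟩ := h
  exact ⟨G.wf _ he (a, σ) (by simp), G.wf _ he (b, τ) (by simp)⟩

lemma reach_cases {G : BDGraph V} {a b : V} (h : G.uReach a b) :
    a = b ∨ (a ∈ G.verts ∧ b ∈ G.verts) := by
  induction h with
  | refl => exact Or.inl rfl
  | tail h1 h2 ih =>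
    obtain ⟨hc, hb⟩ := uadj_mem_verts h2
    rcases ih with rfl | ⟨ha, -⟩
    · exact Or.inr ⟨hc, hb⟩
    · exact Or.inr ⟨ha, hb⟩

lemma splitMap_eq_inl {G : BDGraph V} {u v : V} {α β : Bool}
    (hu : G.IsTipWith u α) (hv : G.IsTipWith v β)
    {e} (he : e ∈ G.E) {y : Side V} (hy : y ∈ e) :
    splitMap u α v β y = (Sum.inl y.1, y.2) := by
  have h1 : y ≠ (u, !α) := by
    rintro rfl
    have := hu e he (!α) hy
    simp at this
  have h2 : y ≠ (v, !β) := by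
    rintro rfl
    have := hv e he (!β) hy
    simp at this
  simp [splitMap, h1, h2]

lemma lift_reach {G : BDGraph V} {u v : V} {α β : Bool}
    (hu : G.IsTipWith u α) (hv : G.IsTipWith v β) {a b : V} (h : G.uReach a b) :
    (G.split2 u α v β).uReach (Sum.inl a) (Sum.inl b) := by
  refine Relation.ReflTransGen.lift Sum.inl (fun a b hab => ?_) a b h
  obtain ⟨e, he, σ, τ, rfl⟩ := hab
  refine ⟨Sym2.map (splitMap u α v β) _, ⟨_, he, rfl⟩, σ, τ, ?_⟩
  rw [Sym2.map_pair_eq, splitMap_eq_inl hu hv he (by simp),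
    splitMap_eq_inl hu hv he (by simp)]

lemma inl_mem_split2_verts {G : BDGraph V} {u v : V} {α β : Bool} {w : V}
    (h : (Sum.inl w : V ⊕ V) ∈ (G.split2 u α v β).verts) : w ∈ G.verts := by
  rcases h with ⟨x, hx, hxw⟩ | h
  · cases Sum.inl_injective hxw; exact hx
  · simp at h

/-- Let `G` be a connected bidirected graph and `{u α, v β}` a snarl
of `G` with snarl component `X`.  Then `X = G` (both on vertices and on edges) iff
`u` and `v` are tips in `G` with signs `α` and `β` respectively. -/
theorem statement_9 (G : BDGraph V) (hG : G.Conn)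
    (u v : V) (α β : Bool) (hs : IsSnarl G u α v β) :
    (SnarlVerts G u α v β = G.verts ∧ SnarlEdges G u α v β = G.E) ↔
      (G.IsTipWith u α ∧ G.IsTipWith v β) := by
  obtain ⟨⟨hne, hreach, h1, h2, h3, h4⟩, -⟩ := hs
  have huG : u ∈ G.verts := by
    rcases reach_cases hreach with h | ⟨ha, -⟩
    · exact absurd (Sum.inl_injective h) hne
    · exact inl_mem_split2_verts ha
  constructor
  · rintro ⟨hV, hE⟩
    constructor
    · intro e he σ hσ
      by_contra hσα
      have hσ' : σ = !α := by cases σ <;> cases α <;> simp_all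
      subst hσ'
      have hmem : e ∈ SnarlEdges G u α v β := hE.symm ▸ he
      have := hmem.2 (u, !α) hσ
      rw [show splitMap u α v β (u, !α) = (Sum.inr u, !α) by simp [splitMap]] at this
      exact h1 this
    · intro e he σ hσ
      by_contra hσβ
      have hσ' : σ = !β := by cases σ <;> cases β <;> simp_all
      subst hσ'
      have hmem : e ∈ SnarlEdges G u α v β := hE.symm ▸ he
      have := hmem.2 (v, !β) hσ
      have hne' : ((v, !β) : Side V) ≠ (u, !α) := by
        simp
        intro h; exact absurd h.symm hne
      rw [show splitMap u α v β (v, !β) = (Sum.inr v, !β) by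
        simp [splitMap, hne']] at this
      exact h2 this
  · rintro ⟨hu, hv⟩
    refine ⟨?_, ?_⟩
    · ext w
      constructor
      · intro hw
        rcases reach_cases (hw : (G.split2 u α v β).uReach (Sum.inl u) (Sum.inl w))
          with h | ⟨-, hmem⟩
        · exact (Sum.inl_injective h) ▸ huG
        · exact inl_mem_split2_verts hmem
      · intro hw
        exact lift_reach hu hv (hG.2 u huG w hw)
    · ext e
      constructor
      · exact fun h => h.1
      · intro he
        refine ⟨he, fun y hy => ?_⟩
        rw [splitMap_eq_inl hu hv he hy]
        exact lift_reach hu hv (hG.2 u huG y.1 (G.wf e he y hy))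

end Paper
end
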